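/- arXiv:2003.14374 — 3 statements merged into one kernel-verified Lean document; each statement's English description precedes it below -/
import Mathlib

section
/- For all real numbers x and s, the integral ∫_s^∞ Ai(x+u)² du converges and equals (Ai'(x+s))² − (x+s)·Ai(x+s)². -/
open MeasureTheory Filter Set Metric intervalIntegral

noncomputable section AiryProofWork

def ph (x t : ℝ) : ℝ := t^3/3 + x*t
def bd (x t : ℝ) : ℝ := Real.sin (ph x t)/(t^2+x) - 2*t*Real.cos (ph x t)/(t^2+x)^3
def w0 (x t : ℝ) : ℝ := (2*x - 10*t^2)/(t^2+x)^4
def w1 (x t : ℝ) : ℝ := 2/(t^2+x)^4 - 4*(2*x-10*t^2)/(t^2+x)^5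
def w2 (x t : ℝ) : ℝ := -16/(t^2+x)^5 + 20*(2*x-10*t^2)/(t^2+x)^6
def g0 (x t : ℝ) : ℝ := Real.cos (ph x t) * w0 x t
def g1 (x t : ℝ) : ℝ := -(t*Real.sin (ph x t)*w0 x t) + Real.cos (ph x t)*w1 x t
def g2 (x t : ℝ) : ℝ := -(t^2*Real.cos (ph x t)*w0 x t) - 2*t*Real.sin (ph x t)*w1 x t
    + Real.cos (ph x t)*w2 x t
def psi (x t : ℝ) : ℝ := -(2*Real.sin (ph x t)/(t^2+x)^3) + 12*t^2*Real.sin (ph x t)/(t^2+x)^4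
    + 24*t*Real.cos (ph x t)/(t^2+x)^5
def bd1 (x t : ℝ) : ℝ := t*Real.cos (ph x t)/(t^2+x) - Real.sin (ph x t)/(t^2+x)^2
    + 2*t^2*Real.sin (ph x t)/(t^2+x)^3 + 6*t*Real.cos (ph x t)/(t^2+x)^4
def bd2 (x t : ℝ) : ℝ := -(t^2*Real.sin (ph x t)/(t^2+x)) - 2*t*Real.cos (ph x t)/(t^2+x)^2
    + 2*Real.sin (ph x t)/(t^2+x)^3 + 2*t^3*Real.cos (ph x t)/(t^2+x)^3
    - 12*t^2*Real.sin (ph x t)/(t^2+x)^4 - 24*t*Real.cos (ph x t)/(t^2+x)^5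

-- derivative in t of ph
lemma hasDerivAt_ph_t (x t : ℝ) : HasDerivAt (ph x) (t^2+x) t := by
  have h : HasDerivAt (fun t : ℝ => t^3/3 + x*t) (3*t^2/3 + x) t := by
    simpa using (((hasDerivAt_pow 3 t).div_const 3).fun_add ((hasDerivAt_id t).const_mul x))
  exact h.congr_deriv (by ring)

lemma hasDerivAt_sin_ph_t (x t : ℝ) :
    HasDerivAt (fun t => Real.sin (ph x t)) ((t^2+x) * Real.cos (ph x t)) t := by
  simpa [mul_comm, Function.comp_def] using (Real.hasDerivAt_sin (ph x t)).comp t (hasDerivAt_ph_t x t)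

lemma hasDerivAt_cos_ph_t (x t : ℝ) :
    HasDerivAt (fun t => Real.cos (ph x t)) (-((t^2+x) * Real.sin (ph x t))) t := by
  simpa [mul_comm, Function.comp_def] using (Real.hasDerivAt_cos (ph x t)).comp t (hasDerivAt_ph_t x t)

lemma hasDerivAt_D_t (x t : ℝ) : HasDerivAt (fun t : ℝ => t^2+x) (2*t) t := by
  simpa using ((hasDerivAt_pow 2 t).add_const x)

-- t-derivative of bd
lemma hasDerivAt_bd_t (x t : ℝ) (hD : t^2 + x ≠ 0) :
    HasDerivAt (bd x) (Real.cos (ph x t) - g0 x t) t := by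
  have h1 : HasDerivAt (fun t => Real.sin (ph x t)/(t^2+x))
      (((t^2+x)*Real.cos (ph x t)*(t^2+x) - Real.sin (ph x t)*(2*t))/(t^2+x)^2) t :=
    (hasDerivAt_sin_ph_t x t).div (hasDerivAt_D_t x t) hD
  have hD3 : (t^2+x)^3 ≠ 0 := pow_ne_zero _ hD
  have h2 : HasDerivAt (fun t : ℝ => 2*t*Real.cos (ph x t))
      (2*Real.cos (ph x t) + 2*t*(-((t^2+x) * Real.sin (ph x t)))) t := by
    simpa using (((hasDerivAt_id t).const_mul 2).fun_mul (hasDerivAt_cos_ph_t x t))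
  have h3 : HasDerivAt (fun t : ℝ => (t^2+x)^3) (3*(t^2+x)^2*(2*t)) t := by
    have := ((hasDerivAt_D_t x t).fun_pow 3)
    simpa [mul_comm, mul_assoc] using this
  have h4 : HasDerivAt (fun t => 2*t*Real.cos (ph x t)/(t^2+x)^3)
      (((2*Real.cos (ph x t) + 2*t*(-((t^2+x) * Real.sin (ph x t))))*(t^2+x)^3
        - 2*t*Real.cos (ph x t)*(3*(t^2+x)^2*(2*t)))/((t^2+x)^3)^2) t :=
    h2.div h3 hD3
  have h := h1.sub h4
  refine h.congr_deriv ?_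
  unfold g0 w0
  field_simp
  ring

-- t-derivative of psi
lemma hasDerivAt_psi_t (x t : ℝ) (hD : t^2 + x ≠ 0) :
    HasDerivAt (fun t => psi x t) (g2 x t - x * g0 x t) t := by
  have hs := hasDerivAt_sin_ph_t x t
  have hc := hasDerivAt_cos_ph_t x t
  have hD3 : (t^2+x)^3 ≠ 0 := pow_ne_zero _ hD
  have hD4 : (t^2+x)^4 ≠ 0 := pow_ne_zero _ hD
  have hD5 : (t^2+x)^5 ≠ 0 := pow_ne_zero _ hD
  have hP3 : HasDerivAt (fun t : ℝ => (t^2+x)^3) (3*(t^2+x)^2*(2*t)) t := by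
    simpa [mul_comm, mul_assoc] using ((hasDerivAt_D_t x t).fun_pow 3)
  have hP4 : HasDerivAt (fun t : ℝ => (t^2+x)^4) (4*(t^2+x)^3*(2*t)) t := by
    simpa [mul_comm, mul_assoc] using ((hasDerivAt_D_t x t).fun_pow 4)
  have hP5 : HasDerivAt (fun t : ℝ => (t^2+x)^5) (5*(t^2+x)^4*(2*t)) t := by
    simpa [mul_comm, mul_assoc] using ((hasDerivAt_D_t x t).fun_pow 5)
  have h1 : HasDerivAt (fun t => 2*Real.sin (ph x t)/(t^2+x)^3)
      ((2*((t^2+x)*Real.cos (ph x t))*(t^2+x)^3 - 2*Real.sin (ph x t)*(3*(t^2+x)^2*(2*t)))/((t^2+x)^3)^2) t :=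
    ((hs.const_mul 2).div hP3 hD3)
  have h2num : HasDerivAt (fun t : ℝ => 12*t^2*Real.sin (ph x t))
      (12*(2*t)*Real.sin (ph x t) + 12*t^2*((t^2+x)*Real.cos (ph x t))) t := by
    have ht2 : HasDerivAt (fun t : ℝ => 12*t^2) (12*(2*t)) t := by
      simpa [mul_comm, mul_assoc] using ((hasDerivAt_pow 2 t).const_mul 12)
    simpa using ht2.fun_mul hs
  have h2 : HasDerivAt (fun t => 12*t^2*Real.sin (ph x t)/(t^2+x)^4)
      (((12*(2*t)*Real.sin (ph x t) + 12*t^2*((t^2+x)*Real.cos (ph x t)))*(t^2+x)^4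
        - 12*t^2*Real.sin (ph x t)*(4*(t^2+x)^3*(2*t)))/((t^2+x)^4)^2) t :=
    h2num.div hP4 hD4
  have h3num : HasDerivAt (fun t : ℝ => 24*t*Real.cos (ph x t))
      (24*Real.cos (ph x t) + 24*t*(-((t^2+x) * Real.sin (ph x t)))) t := by
    simpa using (((hasDerivAt_id t).const_mul 24).fun_mul hc)
  have h3 : HasDerivAt (fun t => 24*t*Real.cos (ph x t)/(t^2+x)^5)
      (((24*Real.cos (ph x t) + 24*t*(-((t^2+x) * Real.sin (ph x t))))*(t^2+x)^5
        - 24*t*Real.cos (ph x t)*(5*(t^2+x)^4*(2*t)))/((t^2+x)^5)^2) t :=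
    h3num.div hP5 hD5
  have h := (h1.neg.add h2).add h3
  refine h.congr_deriv ?_
  unfold g2 g0 w0 w1 w2
  field_simp
  ring



-- derivatives IN x
lemma hasDerivAt_ph_x (x t : ℝ) : HasDerivAt (fun x => ph x t) t x := by
  have : HasDerivAt (fun x : ℝ => t^3/3 + x*t) (0 + 1*t) x :=
    (hasDerivAt_const x (t^3/3)).add ((hasDerivAt_id x).mul_const t)
  simpa [ph] using this

lemma hasDerivAt_sin_ph_x (x t : ℝ) :
    HasDerivAt (fun x => Real.sin (ph x t)) (t * Real.cos (ph x t)) x := by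
  simpa [mul_comm, Function.comp_def] using (Real.hasDerivAt_sin (ph x t)).comp x (hasDerivAt_ph_x x t)

lemma hasDerivAt_cos_ph_x (x t : ℝ) :
    HasDerivAt (fun x => Real.cos (ph x t)) (-(t * Real.sin (ph x t))) x := by
  simpa [mul_comm, Function.comp_def] using (Real.hasDerivAt_cos (ph x t)).comp x (hasDerivAt_ph_x x t)

lemma hasDerivAt_Dpow_x (x t : ℝ) (n : ℕ) :
    HasDerivAt (fun x : ℝ => (t^2+x)^n) (n*(t^2+x)^(n-1)) x := by
  have h : HasDerivAt (fun x : ℝ => t^2+x) 1 x := (hasDerivAt_id x).const_add (t^2)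
  simpa using (h.fun_pow n)

lemma hasDerivAt_g0_x (x t : ℝ) (hD : t^2+x ≠ 0) :
    HasDerivAt (fun x => g0 x t) (g1 x t) x := by
  have hnum : HasDerivAt (fun x : ℝ => 2*x - 10*t^2) 2 x := by
    simpa using (((hasDerivAt_id x).const_mul 2).sub_const (10*t^2))
  have hw : HasDerivAt (fun x => w0 x t)
      ((2*(t^2+x)^4 - (2*x-10*t^2)*(4*(t^2+x)^(4-1)))/((t^2+x)^4)^2) x :=
    hnum.div (hasDerivAt_Dpow_x x t 4) (pow_ne_zero _ hD)
  have h := (hasDerivAt_cos_ph_x x t).mul hw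
  refine h.congr_deriv ?_
  unfold g1 w0 w1
  field_simp
  ring

lemma hasDerivAt_g1_x (x t : ℝ) (hD : t^2+x ≠ 0) :
    HasDerivAt (fun x => g1 x t) (g2 x t) x := by
  have hnum : HasDerivAt (fun x : ℝ => 2*x - 10*t^2) 2 x := by
    simpa using (((hasDerivAt_id x).const_mul 2).sub_const (10*t^2))
  have hw0 : HasDerivAt (fun x => w0 x t)
      ((2*(t^2+x)^4 - (2*x-10*t^2)*(4*(t^2+x)^(4-1)))/((t^2+x)^4)^2) x :=
    hnum.div (hasDerivAt_Dpow_x x t 4) (pow_ne_zero _ hD)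
  have ha : HasDerivAt (fun x => t*Real.sin (ph x t))
      (t*(t * Real.cos (ph x t))) x := (hasDerivAt_sin_ph_x x t).const_mul t
  have h1 : HasDerivAt (fun x => t*Real.sin (ph x t)*w0 x t)
      (t*(t * Real.cos (ph x t))*w0 x t + t*Real.sin (ph x t)*((2*(t^2+x)^4 - (2*x-10*t^2)*(4*(t^2+x)^(4-1)))/((t^2+x)^4)^2)) x :=
    ha.mul hw0
  have hw1a : HasDerivAt (fun x : ℝ => 2/(t^2+x)^4)
      ((0*(t^2+x)^4 - 2*(4*(t^2+x)^(4-1)))/((t^2+x)^4)^2) x :=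
    (hasDerivAt_const x 2).div (hasDerivAt_Dpow_x x t 4) (pow_ne_zero _ hD)
  have hw1b : HasDerivAt (fun x : ℝ => 4*(2*x-10*t^2)/(t^2+x)^5)
      ((4*2*(t^2+x)^5 - 4*(2*x-10*t^2)*(5*(t^2+x)^(5-1)))/((t^2+x)^5)^2) x :=
    (hnum.const_mul 4).div (hasDerivAt_Dpow_x x t 5) (pow_ne_zero _ hD)
  have hw1 : HasDerivAt (fun x => w1 x t)
      ((0*(t^2+x)^4 - 2*(4*(t^2+x)^(4-1)))/((t^2+x)^4)^2
        - (4*2*(t^2+x)^5 - 4*(2*x-10*t^2)*(5*(t^2+x)^(5-1)))/((t^2+x)^5)^2) x := hw1a.sub hw1b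
  have h2 : HasDerivAt (fun x => Real.cos (ph x t)*w1 x t)
      (-(t * Real.sin (ph x t))*w1 x t + Real.cos (ph x t)*((0*(t^2+x)^4 - 2*(4*(t^2+x)^(4-1)))/((t^2+x)^4)^2
        - (4*2*(t^2+x)^5 - 4*(2*x-10*t^2)*(5*(t^2+x)^(5-1)))/((t^2+x)^5)^2)) x :=
    (hasDerivAt_cos_ph_x x t).mul hw1
  have h := h1.neg.add h2
  refine h.congr_deriv ?_
  unfold g2 w0 w1 w2
  field_simp
  ring

lemma hasDerivAt_bd_x (x t : ℝ) (hD : t^2+x ≠ 0) :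
    HasDerivAt (fun x => bd x t) (bd1 x t) x := by
  have h1 : HasDerivAt (fun x => Real.sin (ph x t)/(t^2+x))
      ((t * Real.cos (ph x t)*(t^2+x) - Real.sin (ph x t)*1)/(t^2+x)^2) x := by
    have hd : HasDerivAt (fun x : ℝ => t^2+x) 1 x := (hasDerivAt_id x).const_add (t^2)
    exact (hasDerivAt_sin_ph_x x t).div hd hD
  have h2 : HasDerivAt (fun x => 2*t*Real.cos (ph x t)/(t^2+x)^3)
      ((2*t*(-(t * Real.sin (ph x t)))*(t^2+x)^3 - 2*t*Real.cos (ph x t)*(3*(t^2+x)^(3-1)))/((t^2+x)^3)^2) x :=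
    ((hasDerivAt_cos_ph_x x t).const_mul (2*t)).div (hasDerivAt_Dpow_x x t 3) (pow_ne_zero _ hD)
  have h := h1.sub h2
  refine h.congr_deriv ?_
  unfold bd1
  field_simp
  ring

lemma hasDerivAt_bd1_x (x t : ℝ) (hD : t^2+x ≠ 0) :
    HasDerivAt (fun x => bd1 x t) (bd2 x t) x := by
  have hd : HasDerivAt (fun x : ℝ => t^2+x) 1 x := (hasDerivAt_id x).const_add (t^2)
  have h1 : HasDerivAt (fun x => t*Real.cos (ph x t)/(t^2+x))
      ((t*(-(t * Real.sin (ph x t)))*(t^2+x) - t*Real.cos (ph x t)*1)/(t^2+x)^2) x :=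
    (((hasDerivAt_cos_ph_x x t)).const_mul t).div hd hD
  have h2 : HasDerivAt (fun x => Real.sin (ph x t)/(t^2+x)^2)
      ((t * Real.cos (ph x t)*(t^2+x)^2 - Real.sin (ph x t)*(2*(t^2+x)^(2-1)))/((t^2+x)^2)^2) x :=
    (hasDerivAt_sin_ph_x x t).div (hasDerivAt_Dpow_x x t 2) (pow_ne_zero _ hD)
  have h3 : HasDerivAt (fun x => 2*t^2*Real.sin (ph x t)/(t^2+x)^3)
      ((2*t^2*(t * Real.cos (ph x t))*(t^2+x)^3 - 2*t^2*Real.sin (ph x t)*(3*(t^2+x)^(3-1)))/((t^2+x)^3)^2) x :=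
    ((hasDerivAt_sin_ph_x x t).const_mul (2*t^2)).div (hasDerivAt_Dpow_x x t 3) (pow_ne_zero _ hD)
  have h4 : HasDerivAt (fun x => 6*t*Real.cos (ph x t)/(t^2+x)^4)
      ((6*t*(-(t * Real.sin (ph x t)))*(t^2+x)^4 - 6*t*Real.cos (ph x t)*(4*(t^2+x)^(4-1)))/((t^2+x)^4)^2) x :=
    ((hasDerivAt_cos_ph_x x t).const_mul (6*t)).div (hasDerivAt_Dpow_x x t 4) (pow_ne_zero _ hD)
  have h := ((h1.sub h2).add h3).add h4
  refine h.congr_deriv ?_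
  unfold bd2
  field_simp
  ring

lemma bd2_identity (x t : ℝ) (hD : t^2+x ≠ 0) :
    bd2 x t - x * bd x t = -Real.sin (ph x t) - psi x t := by
  unfold bd2 bd psi
  field_simp
  ring



-- the atomic estimate: |num|/(t^2+x)^n ≤ 2^n*C/(1+t^2) provided |num| ≤ C*(1+t^2)^k, k < n
lemma atom {t x num C : ℝ} {n k : ℕ} (hkn : k + 1 ≤ n)
    (hle : (1+t^2)/2 ≤ t^2+x) (hnum : |num| ≤ C*(1+t^2)^k) :
    |num/(t^2+x)^n| ≤ 2^n*C/(1+t^2) := by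
  have hu1 : (1:ℝ) ≤ 1+t^2 := by nlinarith [sq_nonneg t]
  have hu0 : (0:ℝ) < 1+t^2 := by linarith
  have hd0 : (0:ℝ) < t^2+x := by linarith
  have hC : 0 ≤ C := by
    nlinarith [abs_nonneg num, pow_pos hu0 k, hnum]
  have h1 : ((1+t^2)/2)^n ≤ (t^2+x)^n := pow_le_pow_left₀ (by positivity) hle n
  have h2 : (1+t^2)^(k+1) ≤ (1+t^2)^n := pow_le_pow_right₀ hu1 hkn
  rw [abs_div, abs_of_pos (pow_pos hd0 n)]
  calc |num|/(t^2+x)^n ≤ (C*(1+t^2)^k)/((1+t^2)/2)^n := by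
        apply div_le_div₀ (by positivity) hnum (by positivity) h1
    _ = 2^n*C*(1+t^2)^k/(1+t^2)^n := by
        rw [div_pow]; field_simp
    _ ≤ 2^n*C*(1+t^2)^k/(1+t^2)^(k+1) := by
        apply div_le_div_of_nonneg_left (by positivity) (by positivity) h2
    _ = 2^n*C/(1+t^2) := by
        rw [pow_succ]
        rw [div_eq_div_iff (by positivity) (by positivity)]
        ring
  
-- numerator bound
lemma num_bound {x t M : ℝ} (hM : |x| ≤ M) (hM1 : 1 ≤ M) :
    |2*x - 10*t^2| ≤ 12*M*(1+t^2) := by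
  have := abs_le.1 hM
  have h := abs_le.2 (show -(12*M*(1+t^2)) ≤ 2*x - 10*t^2 ∧ 2*x-10*t^2 ≤ 12*M*(1+t^2) by
    constructor <;> nlinarith [sq_nonneg t])
  exact h

lemma t_le_u {t : ℝ} (ht : 0 ≤ t) : t ≤ 1+t^2 := by nlinarith

lemma g0_bound {x t M : ℝ} (hle : (1+t^2)/2 ≤ t^2+x) (hM : |x| ≤ M) (hM1 : 1 ≤ M) :
    |g0 x t| ≤ 20000*M/(1+t^2) := by
  have hu0 : (0:ℝ) < 1+t^2 := by positivity
  have h1 : |g0 x t| ≤ |(2*x-10*t^2)/(t^2+x)^4| := by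
    rw [g0, w0, abs_mul]
    calc |Real.cos (ph x t)| * |(2*x-10*t^2)/(t^2+x)^4|
        ≤ 1 * |(2*x-10*t^2)/(t^2+x)^4| :=
          mul_le_mul_of_nonneg_right (Real.abs_cos_le_one _) (abs_nonneg _)
      _ = _ := one_mul _
  have h2 : |(2*x-10*t^2)/(t^2+x)^4| ≤ 2^4*(12*M)/(1+t^2) := by
    apply atom (k := 1) (by norm_num) hle
    simpa [pow_one] using num_bound hM hM1
  calc |g0 x t| ≤ 2^4*(12*M)/(1+t^2) := h1.trans h2
    _ ≤ 20000*M/(1+t^2) := by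
        exact div_le_div₀ (by nlinarith) (by nlinarith) hu0 le_rfl


lemma abs_trig_mul {b : ℝ} (hb : |b| ≤ 1) (c : ℝ) : |b*c| ≤ |c| := by
  rw [abs_mul]
  exact mul_le_of_le_one_left (abs_nonneg _) hb

lemma g1_bound {x t M : ℝ} (ht : 0 ≤ t) (hle : (1+t^2)/2 ≤ t^2+x) (hM : |x| ≤ M) (hM1 : 1 ≤ M) :
    |g1 x t| ≤ 20000*M/(1+t^2) := by
  have hu0 : (0:ℝ) < 1+t^2 := by positivity
  have hnum := num_bound (t := t) hM hM1
  have hM0 : (0:ℝ) ≤ M := le_trans zero_le_one hM1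
  have hA : |t*Real.sin (ph x t)*w0 x t| ≤ 2^4*(12*M)/(1+t^2) := by
    have : t*Real.sin (ph x t)*w0 x t = (t*Real.sin (ph x t)*(2*x-10*t^2))/(t^2+x)^4 := by
      rw [w0]; ring
    rw [this]
    apply atom (k := 2) (by norm_num) hle
    calc |t*Real.sin (ph x t)*(2*x-10*t^2)|
        = |t| * |Real.sin (ph x t)| * |2*x-10*t^2| := by rw [abs_mul, abs_mul]
      _ ≤ (1+t^2)*1*(12*M*(1+t^2)) := by
          apply mul_le_mul ?_ hnum (abs_nonneg _) (by positivity)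
          apply mul_le_mul ?_ (Real.abs_sin_le_one _) (abs_nonneg _) (by positivity)
          rw [abs_of_nonneg ht]; exact t_le_u ht
      _ = 12*M*(1+t^2)^2 := by ring
  have hB : |Real.cos (ph x t)*(2/(t^2+x)^4)| ≤ 2^4*2/(1+t^2) := by
    apply le_trans (abs_trig_mul (Real.abs_cos_le_one _) _)
    apply atom (k := 0) (by norm_num) hle
    simp [abs_of_nonneg]
  have hC : |Real.cos (ph x t)*(4*(2*x-10*t^2)/(t^2+x)^5)| ≤ 2^5*(48*M)/(1+t^2) := by
    apply le_trans (abs_trig_mul (Real.abs_cos_le_one _) _)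
    have : 4*(2*x-10*t^2)/(t^2+x)^5 = (4*(2*x-10*t^2))/(t^2+x)^5 := by ring
    rw [this]
    apply atom (k := 1) (by norm_num) hle
    rw [abs_mul, pow_one]
    calc |(4:ℝ)| * |2*x-10*t^2| ≤ 4*(12*M*(1+t^2)) := by
          rw [abs_of_nonneg (by norm_num : (0:ℝ) ≤ 4)]
          exact mul_le_mul_of_nonneg_left hnum (by norm_num)
      _ = 48*M*(1+t^2) := by ring
  have expand : g1 x t = -(t*Real.sin (ph x t)*w0 x t)
      + (Real.cos (ph x t)*(2/(t^2+x)^4) - Real.cos (ph x t)*(4*(2*x-10*t^2)/(t^2+x)^5)) := by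
    rw [g1, w1]; ring
  calc |g1 x t| ≤ |t*Real.sin (ph x t)*w0 x t| + (|Real.cos (ph x t)*(2/(t^2+x)^4)|
        + |Real.cos (ph x t)*(4*(2*x-10*t^2)/(t^2+x)^5)|) := by
        rw [expand]
        exact (abs_add_le _ _).trans (by rw [abs_neg]; gcongr; exact abs_sub _ _)
    _ ≤ 2^4*(12*M)/(1+t^2) + (2^4*2/(1+t^2) + 2^5*(48*M)/(1+t^2)) := by gcongr
    _ ≤ 20000*M/(1+t^2) := by
        rw [← add_div, ← add_div]
        exact div_le_div₀ (by nlinarith) (by nlinarith) hu0 le_rfl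

lemma g2_bound {x t M : ℝ} (ht : 0 ≤ t) (hle : (1+t^2)/2 ≤ t^2+x) (hM : |x| ≤ M) (hM1 : 1 ≤ M) :
    |g2 x t| ≤ 20000*M/(1+t^2) := by
  have hu0 : (0:ℝ) < 1+t^2 := by positivity
  have hnum := num_bound (t := t) hM hM1
  have hM0 : (0:ℝ) ≤ M := le_trans zero_le_one hM1
  have htu := t_le_u ht
  have ht2u : t^2 ≤ 1+t^2 := by nlinarith
  have hA : |t^2*Real.cos (ph x t)*w0 x t| ≤ 2^4*(12*M)/(1+t^2) := by
    have : t^2*Real.cos (ph x t)*w0 x t = (t^2*Real.cos (ph x t)*(2*x-10*t^2))/(t^2+x)^4 := by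
      rw [w0]; ring
    rw [this]
    apply atom (k := 2) (by norm_num) hle
    calc |t^2*Real.cos (ph x t)*(2*x-10*t^2)|
        = |t^2| * |Real.cos (ph x t)| * |2*x-10*t^2| := by rw [abs_mul, abs_mul]
      _ ≤ (1+t^2)*1*(12*M*(1+t^2)) := by
          apply mul_le_mul ?_ hnum (abs_nonneg _) (by positivity)
          apply mul_le_mul ?_ (Real.abs_cos_le_one _) (abs_nonneg _) (by positivity)
          rw [abs_of_nonneg (sq_nonneg t)]; exact ht2u
      _ = 12*M*(1+t^2)^2 := by ring
  have hB : |2*t*Real.sin (ph x t)*(2/(t^2+x)^4)| ≤ 2^4*(4)/(1+t^2) := by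
    have : 2*t*Real.sin (ph x t)*(2/(t^2+x)^4) = (4*t*Real.sin (ph x t))/(t^2+x)^4 := by ring
    rw [this]
    apply atom (k := 1) (by norm_num) hle
    rw [pow_one]
    calc |4*t*Real.sin (ph x t)| = |4*t| * |Real.sin (ph x t)| := by rw [abs_mul]
      _ ≤ (4*(1+t^2))*1 := by
          apply mul_le_mul ?_ (Real.abs_sin_le_one _) (abs_nonneg _) (by positivity)
          rw [abs_of_nonneg (by linarith)]; linarith
      _ = 4*(1+t^2) := by ring
  have hC : |2*t*Real.sin (ph x t)*(4*(2*x-10*t^2)/(t^2+x)^5)| ≤ 2^5*(96*M)/(1+t^2) := by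
    have : 2*t*Real.sin (ph x t)*(4*(2*x-10*t^2)/(t^2+x)^5)
        = (8*t*Real.sin (ph x t)*(2*x-10*t^2))/(t^2+x)^5 := by ring
    rw [this]
    apply atom (k := 2) (by norm_num) hle
    calc |8*t*Real.sin (ph x t)*(2*x-10*t^2)| = |8*t| * |Real.sin (ph x t)| * |2*x-10*t^2| := by
          rw [abs_mul, abs_mul]
      _ ≤ (8*(1+t^2))*1*(12*M*(1+t^2)) := by
          apply mul_le_mul ?_ hnum (abs_nonneg _) (by positivity)
          apply mul_le_mul ?_ (Real.abs_sin_le_one _) (abs_nonneg _) (by positivity)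
          rw [abs_of_nonneg (by linarith)]; linarith
      _ = 96*M*(1+t^2)^2 := by ring
  have hD : |Real.cos (ph x t)*(16/(t^2+x)^5)| ≤ 2^5*16/(1+t^2) := by
    apply le_trans (abs_trig_mul (Real.abs_cos_le_one _) _)
    apply atom (k := 0) (by norm_num) hle
    simp [abs_of_nonneg]
  have hE : |Real.cos (ph x t)*(20*(2*x-10*t^2)/(t^2+x)^6)| ≤ 2^6*(240*M)/(1+t^2) := by
    apply le_trans (abs_trig_mul (Real.abs_cos_le_one _) _)
    have : 20*(2*x-10*t^2)/(t^2+x)^6 = (20*(2*x-10*t^2))/(t^2+x)^6 := by ring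
    rw [this]
    apply atom (k := 1) (by norm_num) hle
    rw [abs_mul, pow_one]
    calc |(20:ℝ)| * |2*x-10*t^2| ≤ 20*(12*M*(1+t^2)) := by
          rw [abs_of_nonneg (by norm_num : (0:ℝ) ≤ 20)]
          exact mul_le_mul_of_nonneg_left hnum (by norm_num)
      _ = 240*M*(1+t^2) := by ring
  have expand : g2 x t = -(t^2*Real.cos (ph x t)*w0 x t)
      - (2*t*Real.sin (ph x t)*(2/(t^2+x)^4) - 2*t*Real.sin (ph x t)*(4*(2*x-10*t^2)/(t^2+x)^5))
      + (-(Real.cos (ph x t)*(16/(t^2+x)^5)) + Real.cos (ph x t)*(20*(2*x-10*t^2)/(t^2+x)^6)) := by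
    rw [g2, w0, w1, w2]; ring
  calc |g2 x t| ≤ |t^2*Real.cos (ph x t)*w0 x t|
        + (|2*t*Real.sin (ph x t)*(2/(t^2+x)^4)| + |2*t*Real.sin (ph x t)*(4*(2*x-10*t^2)/(t^2+x)^5)|)
        + (|Real.cos (ph x t)*(16/(t^2+x)^5)| + |Real.cos (ph x t)*(20*(2*x-10*t^2)/(t^2+x)^6)|) := by
        rw [expand]
        refine le_trans (abs_add_le _ _)
          (add_le_add (le_trans (abs_sub _ _) ?_) (le_trans (abs_add_le _ _) ?_))
        · rw [abs_neg]
          exact add_le_add le_rfl (abs_sub _ _)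
        · rw [abs_neg]
    _ ≤ 2^4*(12*M)/(1+t^2) + (2^4*4/(1+t^2) + 2^5*(96*M)/(1+t^2))
        + (2^5*16/(1+t^2) + 2^6*(240*M)/(1+t^2)) := by gcongr
    _ ≤ 20000*M/(1+t^2) := by
        rw [← add_div, ← add_div, ← add_div, ← add_div]
        exact div_le_div₀ (by nlinarith) (by nlinarith) hu0 le_rfl



lemma g0_decay {x t : ℝ} (hx : 2 ≤ x) (ht : 0 ≤ t) : |g0 x t| ≤ 10/(x^2*(1+t^2)) := by
  have hu0 : (0:ℝ) < 1+t^2 := by positivity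
  have hD0 : (0:ℝ) < t^2+x := by nlinarith
  have hnum : |2*x - 10*t^2| ≤ 10*(t^2+x) := by
    rw [abs_le]; constructor <;> nlinarith
  have h3 : x^2*(1+t^2) ≤ (t^2+x)^3 := by nlinarith [sq_nonneg t, sq_nonneg (t*x), sq_nonneg (t^2)]
  calc |g0 x t| ≤ |w0 x t| := abs_trig_mul (Real.abs_cos_le_one _) _
    _ = |2*x-10*t^2|/(t^2+x)^4 := by
        rw [w0, abs_div, abs_of_pos (show (0:ℝ) < (t^2+x)^4 by positivity)]
    _ ≤ (10*(t^2+x))/(t^2+x)^4 := by gcongr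
    _ = 10/(t^2+x)^3 := by field_simp
    _ ≤ 10/(x^2*(1+t^2)) := by apply div_le_div_of_nonneg_left (by norm_num) (by positivity) h3

lemma g1_decay {x t : ℝ} (hx : 2 ≤ x) (ht : 0 ≤ t) : |g1 x t| ≤ 52/(x*(1+t^2)) := by
  have hu0 : (0:ℝ) < 1+t^2 := by positivity
  have hD0 : (0:ℝ) < t^2+x := by nlinarith
  have hD1 : (1:ℝ) ≤ t^2+x := by nlinarith
  have htD : t ≤ t^2+x := by nlinarith [sq_nonneg (t-1)]
  have hnum : |2*x - 10*t^2| ≤ 10*(t^2+x) := by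
    rw [abs_le]; constructor <;> nlinarith
  have h2 : x*(1+t^2) ≤ (t^2+x)^2 := by nlinarith [sq_nonneg t]
  have h4 : x*(1+t^2) ≤ (t^2+x)^4 := by
    calc x*(1+t^2) ≤ (t^2+x)^2 := h2
      _ ≤ (t^2+x)^4 := pow_le_pow_right₀ hD1 (by norm_num)
  have hA : |t*Real.sin (ph x t)*w0 x t| ≤ 10/(x*(1+t^2)) := by
    calc |t*Real.sin (ph x t)*w0 x t| = |t| * |Real.sin (ph x t)| * |w0 x t| := by
          rw [abs_mul, abs_mul]
      _ ≤ (t^2+x)*1*(|2*x-10*t^2|/(t^2+x)^4) := by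
          apply mul_le_mul ?_ ?_ (abs_nonneg _) (by positivity)
          · apply mul_le_mul ?_ (Real.abs_sin_le_one _) (abs_nonneg _) hD0.le
            rw [abs_of_nonneg ht]; exact htD
          · rw [w0, abs_div, abs_of_pos (show (0:ℝ) < (t^2+x)^4 by positivity)]
      _ ≤ (t^2+x)*1*((10*(t^2+x))/(t^2+x)^4) := by gcongr
      _ = 10/(t^2+x)^2 := by field_simp
      _ ≤ 10/(x*(1+t^2)) := by apply div_le_div_of_nonneg_left (by norm_num) (by positivity) h2
  have hB : |Real.cos (ph x t)*w1 x t| ≤ 42/(x*(1+t^2)) := by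
    have hw1 : |w1 x t| ≤ 42/(x*(1+t^2)) := by
      calc |w1 x t| ≤ |2/(t^2+x)^4| + |4*(2*x-10*t^2)/(t^2+x)^5| := abs_sub _ _
        _ = 2/(t^2+x)^4 + (4*|2*x-10*t^2|)/(t^2+x)^5 := by
            rw [abs_div, abs_div, abs_of_pos (by positivity : (0:ℝ) < (t^2+x)^4),
              abs_of_pos (by positivity : (0:ℝ) < (t^2+x)^5), abs_mul]
            norm_num
        _ ≤ 2/(x*(1+t^2)) + (4*(10*(t^2+x)))/(t^2+x)^5 := by gcongr
        _ = 2/(x*(1+t^2)) + 40/(t^2+x)^4 := by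
            congr 1
            field_simp; ring
        _ ≤ 2/(x*(1+t^2)) + 40/(x*(1+t^2)) := by gcongr
        _ = 42/(x*(1+t^2)) := by ring
    exact (abs_trig_mul (Real.abs_cos_le_one _) _).trans hw1
  calc |g1 x t| ≤ |t*Real.sin (ph x t)*w0 x t| + |Real.cos (ph x t)*w1 x t| := by
        rw [g1]
        exact (abs_add_le _ _).trans (by rw [abs_neg])
    _ ≤ 10/(x*(1+t^2)) + 42/(x*(1+t^2)) := add_le_add hA hB
    _ = 52/(x*(1+t^2)) := by ring



lemma key_lb {a x t : ℝ} (ha : 0 ≤ a) (hx : 1 - 2*x ≤ a^2) (ht : a ≤ t) :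
    (1+t^2)/2 ≤ t^2+x := by nlinarith

lemma key_pos {a x t : ℝ} (ha : 0 ≤ a) (hx : 1 - 2*x ≤ a^2) (ht : a ≤ t) :
    0 < t^2+x := lt_of_lt_of_le (by positivity) (key_lb ha hx ht)

lemma cont_cos_ph (x : ℝ) : Continuous fun t => Real.cos (ph x t) := by
  apply Real.continuous_cos.comp; unfold ph; continuity

lemma cont_sin_ph (x : ℝ) : Continuous fun t => Real.sin (ph x t) := by
  apply Real.continuous_sin.comp; unfold ph; continuity

lemma contOn_g0 {a x : ℝ} (hpos : ∀ t, a ≤ t → 0 < t^2+x) :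
    ContinuousOn (g0 x) (Ici a) := by
  apply Continuous.continuousOn (s := Ici a) (cont_cos_ph x) |>.mul
  unfold w0
  apply ContinuousOn.div (by fun_prop) (by fun_prop)
  exact fun t ht => pow_ne_zero _ (hpos t ht).ne'

lemma integrable_bound (K a : ℝ) : IntegrableOn (fun t => K/(1+t^2)) (Ioi a) volume := by
  have := (integrable_inv_one_add_sq.const_mul K).integrableOn (s := Ioi a)
  simpa [div_eq_mul_inv] using this

lemma integrableOn_g0 {a x M : ℝ} (ha : 0 ≤ a) (hx : 1 - 2*x ≤ a^2)
    (hM : |x| ≤ M) (hM1 : 1 ≤ M) : IntegrableOn (g0 x) (Ioi a) volume := by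
  apply Integrable.mono' (integrable_bound (20000*M) a)
  · exact ((contOn_g0 (fun t ht => key_pos ha hx ht)).mono Ioi_subset_Ici_self).aestronglyMeasurable
      measurableSet_Ioi
  · filter_upwards [ae_restrict_mem measurableSet_Ioi] with t ht
    rw [Real.norm_eq_abs]
    exact g0_bound (key_lb ha hx (le_of_lt ht)) hM hM1

lemma bd_tendsto_zero {a x : ℝ} (ha : 0 ≤ a) (hx : 1 - 2*x ≤ a^2) :
    Tendsto (fun t => bd x t) atTop (nhds 0) := by
  have hb : ∀ t, a ≤ t → |bd x t| ≤ 18/(1+t^2) := by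
    intro t ht
    have hle := key_lb ha hx ht
    have ht0 : 0 ≤ t := le_trans ha ht
    have h1 : |Real.sin (ph x t)/(t^2+x)| ≤ 2^1*1/(1+t^2) := by
      rw [show (t^2+x) = (t^2+x)^1 by rw [pow_one]]
      apply atom (k := 0) (by norm_num) hle
      simpa using Real.abs_sin_le_one _
    have h2 : |2*t*Real.cos (ph x t)/(t^2+x)^3| ≤ 2^3*2/(1+t^2) := by
      apply atom (k := 1) (by norm_num) hle
      rw [pow_one, abs_mul]
      calc |2*t| * |Real.cos (ph x t)| ≤ (2*(1+t^2))*1 := by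
            apply mul_le_mul ?_ (Real.abs_cos_le_one _) (abs_nonneg _) (by positivity)
            rw [abs_of_nonneg (by linarith)]; nlinarith
        _ = 2*(1+t^2) := by ring
    calc |bd x t| ≤ |Real.sin (ph x t)/(t^2+x)| + |2*t*Real.cos (ph x t)/(t^2+x)^3| := by
          rw [bd]
          have : Real.sin (ph x t)/(t^2+x) - 2*t*Real.cos (ph x t)/(t^2+x)^3
              = Real.sin (ph x t)/(t^2+x) - (2*t*Real.cos (ph x t)/(t^2+x)^3) := by ring
          rw [this]; exact abs_sub _ _
      _ ≤ 2^1*1/(1+t^2) + 2^3*2/(1+t^2) := add_le_add h1 h2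
      _ ≤ 18/(1+t^2) := by rw [← add_div]; norm_num
  have hlim : Tendsto (fun t : ℝ => 18/(1+t^2)) atTop (nhds 0) := by
    apply Tendsto.div_atTop tendsto_const_nhds
    apply tendsto_atTop_add_const_left
    exact tendsto_pow_atTop (by norm_num) |>.comp tendsto_id |>.congr (fun t => rfl)
  have hlim' : Tendsto (fun t : ℝ => -(18/(1+t^2))) atTop (nhds 0) := by
    simpa using hlim.neg
  apply tendsto_of_tendsto_of_tendsto_of_le_of_le' hlim' hlim
  · filter_upwards [eventually_ge_atTop a] with t ht
    exact neg_le_of_abs_le (hb t ht)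
  · filter_upwards [eventually_ge_atTop a] with t ht
    exact le_of_abs_le (hb t ht)

-- The key representation
lemma representation {a x M : ℝ} (ha : 0 ≤ a) (hx : 1 - 2*x ≤ a^2)
    (hM : |x| ≤ M) (hM1 : 1 ≤ M) (L : ℝ)
    (hAix : Tendsto (fun R : ℝ => ∫ t in (0:ℝ)..R, Real.cos (ph x t)) atTop (nhds L)) :
    L = (∫ t in (0:ℝ)..a, Real.cos (ph x t)) - bd x a + ∫ t in Ioi a, g0 x t := by
  have hpos : ∀ t, a ≤ t → 0 < t^2+x := fun t ht => key_pos ha hx ht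
  have hsplit : ∀ R, a ≤ R → (∫ t in (0:ℝ)..R, Real.cos (ph x t))
      = (∫ t in (0:ℝ)..a, Real.cos (ph x t)) + (bd x R - bd x a + ∫ t in a..R, g0 x t) := by
    intro R hR
    have hint1 : IntervalIntegrable (fun t => Real.cos (ph x t)) volume 0 a :=
      (cont_cos_ph x).intervalIntegrable _ _
    have hint2 : IntervalIntegrable (fun t => Real.cos (ph x t)) volume a R :=
      (cont_cos_ph x).intervalIntegrable _ _
    have huIcc : uIcc a R = Icc a R := uIcc_of_le hR
    have hg0int : IntervalIntegrable (g0 x) volume a R := by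
      apply ContinuousOn.intervalIntegrable
      rw [huIcc]
      exact (contOn_g0 hpos).mono (Icc_subset_Ici_self)
    have hftc : ∫ t in a..R, (Real.cos (ph x t) - g0 x t) = bd x R - bd x a := by
      apply integral_eq_sub_of_hasDerivAt
      · intro t ht
        rw [huIcc] at ht
        exact hasDerivAt_bd_t x t (hpos t ht.1).ne'
      · exact hint2.sub hg0int
    have : ∫ t in a..R, Real.cos (ph x t) = bd x R - bd x a + ∫ t in a..R, g0 x t := by
      rw [← hftc, intervalIntegral.integral_sub hint2 hg0int]; ring
    rw [← intervalIntegral.integral_add_adjacent_intervals hint1 hint2, this]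
  have hgoal : Tendsto (fun R : ℝ => ∫ t in (0:ℝ)..R, Real.cos (ph x t)) atTop
      (nhds ((∫ t in (0:ℝ)..a, Real.cos (ph x t)) - bd x a + ∫ t in Ioi a, g0 x t)) := by
    have h1 : Tendsto (fun R => (∫ t in (0:ℝ)..a, Real.cos (ph x t))
        + (bd x R - bd x a + ∫ t in a..R, g0 x t)) atTop
        (nhds ((∫ t in (0:ℝ)..a, Real.cos (ph x t)) + (0 - bd x a + ∫ t in Ioi a, g0 x t))) := by
      apply tendsto_const_nhds.add
      apply Tendsto.add
      · exact (bd_tendsto_zero ha hx).sub_const _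
      · exact intervalIntegral_tendsto_integral_Ioi a (integrableOn_g0 ha hx hM hM1) tendsto_id
    have h2 : (fun R => (∫ t in (0:ℝ)..a, Real.cos (ph x t))
        + (bd x R - bd x a + ∫ t in a..R, g0 x t)) =ᶠ[atTop]
        (fun R : ℝ => ∫ t in (0:ℝ)..R, Real.cos (ph x t)) := by
      filter_upwards [eventually_ge_atTop a] with R hR
      exact (hsplit R hR).symm
    have h3 := h1.congr' h2
    convert h3 using 2
    ring
  exact tendsto_nhds_unique hAix hgoal




lemma contOn_g1 {a x : ℝ} (hpos : ∀ t, a ≤ t → 0 < t^2+x) :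
    ContinuousOn (g1 x) (Ici a) := by
  have hne : ∀ t ∈ Ici a, ¬ t^2+x = 0 := fun t ht => (hpos t ht).ne'
  unfold g1 w0 w1 ph
  apply ContinuousOn.add
  · apply ContinuousOn.neg
    apply ContinuousOn.mul (by fun_prop)
    exact ContinuousOn.div (by fun_prop) (by fun_prop) (fun t ht => pow_ne_zero _ (hne t ht))
  · apply ContinuousOn.mul (by fun_prop)
    apply ContinuousOn.sub
    · exact ContinuousOn.div (by fun_prop) (by fun_prop) (fun t ht => pow_ne_zero _ (hne t ht))
    · exact ContinuousOn.div (by fun_prop) (by fun_prop) (fun t ht => pow_ne_zero _ (hne t ht))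

lemma contOn_g2 {a x : ℝ} (hpos : ∀ t, a ≤ t → 0 < t^2+x) :
    ContinuousOn (g2 x) (Ici a) := by
  have hne : ∀ t ∈ Ici a, ¬ t^2+x = 0 := fun t ht => (hpos t ht).ne'
  unfold g2 w0 w1 w2 ph
  apply ContinuousOn.add
  apply ContinuousOn.sub
  · apply ContinuousOn.neg
    apply ContinuousOn.mul (by fun_prop)
    exact ContinuousOn.div (by fun_prop) (by fun_prop) (fun t ht => pow_ne_zero _ (hne t ht))
  · apply ContinuousOn.mul (by fun_prop)
    apply ContinuousOn.sub
    · exact ContinuousOn.div (by fun_prop) (by fun_prop) (fun t ht => pow_ne_zero _ (hne t ht))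
    · exact ContinuousOn.div (by fun_prop) (by fun_prop) (fun t ht => pow_ne_zero _ (hne t ht))
  · apply ContinuousOn.mul (by fun_prop)
    apply ContinuousOn.add
    · exact ContinuousOn.div (by fun_prop) (by fun_prop) (fun t ht => pow_ne_zero _ (hne t ht))
    · exact ContinuousOn.div (by fun_prop) (by fun_prop) (fun t ht => pow_ne_zero _ (hne t ht))

lemma integrableOn_g1 {a x M : ℝ} (ha : 0 ≤ a) (hx : 1 - 2*x ≤ a^2)
    (hM : |x| ≤ M) (hM1 : 1 ≤ M) : IntegrableOn (g1 x) (Ioi a) volume := by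
  apply Integrable.mono' (integrable_bound (20000*M) a)
  · exact ((contOn_g1 (fun t ht => key_pos ha hx ht)).mono Ioi_subset_Ici_self).aestronglyMeasurable
      measurableSet_Ioi
  · filter_upwards [ae_restrict_mem measurableSet_Ioi] with t ht
    rw [Real.norm_eq_abs]
    exact g1_bound (le_trans ha (le_of_lt ht)) (key_lb ha hx (le_of_lt ht)) hM hM1

section deriv

lemma ball_cond {x₀ a x' x : ℝ} (ha3 : 3-2*x₀ ≤ a^2) (hx' : x' ∈ ball x₀ (1/2))
    (hx : x ∈ ball x' (1/4)) :
    1-2*x ≤ a^2 ∧ |x| ≤ |x₀|+1 ∧ (1:ℝ) ≤ |x₀|+1 := by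
  rw [mem_ball, Real.dist_eq] at hx' hx
  have h1 := abs_lt.1 hx'
  have h2 := abs_lt.1 hx
  have h3 := abs_le.1 (le_refl |x₀|)
  have h4 := neg_abs_le x₀
  have h5 := le_abs_self x₀
  refine ⟨by nlinarith, ?_, by linarith [abs_nonneg x₀]⟩
  rw [abs_le]
  constructor <;> nlinarith

lemma hasDerivAt_J {x₀ a : ℝ} (ha : 0 ≤ a) (ha3 : 3-2*x₀ ≤ a^2) {x' : ℝ}
    (hx' : x' ∈ ball x₀ (1/2)) :
    HasDerivAt (fun y => ∫ t in Ioi a, g0 y t) (∫ t in Ioi a, g1 x' t) x' := by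
  have hx'x' : x' ∈ ball x' (1/4) := mem_ball_self (by norm_num)
  obtain ⟨hc1, hc2, hc3⟩ := ball_cond ha3 hx' hx'x'
  have H := _root_.hasDerivAt_integral_of_dominated_loc_of_deriv_le
    (F := fun y t => g0 y t) (F' := fun y t => g1 y t) (x₀ := x')
    (μ := volume.restrict (Ioi a)) (bound := fun t => 20000*(|x₀|+1)/(1+t^2))
    (ball_mem_nhds x' (show (0:ℝ) < 1/4 by norm_num)) ?_ ?_ ?_ ?_ ?_ ?_
  · exact H.2
  · filter_upwards [ball_mem_nhds x' (show (0:ℝ) < 1/4 by norm_num)] with y hy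
    obtain ⟨hd1, _, _⟩ := ball_cond ha3 hx' hy
    exact ((contOn_g0 (fun t ht => key_pos ha hd1 ht)).mono
      Ioi_subset_Ici_self).aestronglyMeasurable measurableSet_Ioi
  · exact integrableOn_g0 ha hc1 hc2 hc3
  · exact ((contOn_g1 (fun t ht => key_pos ha hc1 ht)).mono
      Ioi_subset_Ici_self).aestronglyMeasurable measurableSet_Ioi
  · filter_upwards [ae_restrict_mem measurableSet_Ioi] with t ht
    intro y hy
    obtain ⟨hd1, hd2, hd3⟩ := ball_cond ha3 hx' hy
    rw [Real.norm_eq_abs]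
    exact g1_bound (le_trans ha (le_of_lt ht)) (key_lb ha hd1 (le_of_lt ht)) hd2 hd3
  · exact integrable_bound _ _
  · filter_upwards [ae_restrict_mem measurableSet_Ioi] with t ht
    intro y hy
    obtain ⟨hd1, _, _⟩ := ball_cond ha3 hx' hy
    exact hasDerivAt_g0_x y t (key_pos ha hd1 (le_of_lt ht)).ne'

lemma hasDerivAt_J1 {x₀ a : ℝ} (ha : 0 ≤ a) (ha3 : 3-2*x₀ ≤ a^2) {x' : ℝ}
    (hx' : x' ∈ ball x₀ (1/2)) :
    HasDerivAt (fun y => ∫ t in Ioi a, g1 y t) (∫ t in Ioi a, g2 x' t) x' := by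
  have hx'x' : x' ∈ ball x' (1/4) := mem_ball_self (by norm_num)
  obtain ⟨hc1, hc2, hc3⟩ := ball_cond ha3 hx' hx'x'
  have H := _root_.hasDerivAt_integral_of_dominated_loc_of_deriv_le
    (F := fun y t => g1 y t) (F' := fun y t => g2 y t) (x₀ := x')
    (μ := volume.restrict (Ioi a)) (bound := fun t => 20000*(|x₀|+1)/(1+t^2))
    (ball_mem_nhds x' (show (0:ℝ) < 1/4 by norm_num)) ?_ ?_ ?_ ?_ ?_ ?_
  · exact H.2
  · filter_upwards [ball_mem_nhds x' (show (0:ℝ) < 1/4 by norm_num)] with y hy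
    obtain ⟨hd1, _, _⟩ := ball_cond ha3 hx' hy
    exact ((contOn_g1 (fun t ht => key_pos ha hd1 ht)).mono
      Ioi_subset_Ici_self).aestronglyMeasurable measurableSet_Ioi
  · exact integrableOn_g1 ha hc1 hc2 hc3
  · exact ((contOn_g2 (fun t ht => key_pos ha hc1 ht)).mono
      Ioi_subset_Ici_self).aestronglyMeasurable measurableSet_Ioi
  · filter_upwards [ae_restrict_mem measurableSet_Ioi] with t ht
    intro y hy
    obtain ⟨hd1, hd2, hd3⟩ := ball_cond ha3 hx' hy
    rw [Real.norm_eq_abs]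
    exact g2_bound (le_trans ha (le_of_lt ht)) (key_lb ha hd1 (le_of_lt ht)) hd2 hd3
  · exact integrable_bound _ _
  · filter_upwards [ae_restrict_mem measurableSet_Ioi] with t ht
    intro y hy
    obtain ⟨hd1, _, _⟩ := ball_cond ha3 hx' hy
    exact hasDerivAt_g1_x y t (key_pos ha hd1 (le_of_lt ht)).ne'

-- derivative of the finite piece ∫_0^a cos(ph x t) dt
lemma hasDerivAt_K {a : ℝ} (ha : 0 ≤ a) (x' : ℝ) :
    HasDerivAt (fun y => ∫ t in (0:ℝ)..a, Real.cos (ph y t))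
      (∫ t in (0:ℝ)..a, -(t*Real.sin (ph x' t))) x' := by
  have hphx : ∀ (y t : ℝ), HasDerivAt (fun x => ph x t) t y := by
    intro y t
    have : HasDerivAt (fun x : ℝ => t^3/3 + x*t) (0 + 1*t) y :=
      (hasDerivAt_const y (t^3/3)).add ((hasDerivAt_id y).mul_const t)
    simpa [ph] using this
  have H := intervalIntegral.hasDerivAt_integral_of_dominated_loc_of_deriv_le
    (F := fun y t => Real.cos (ph y t)) (F' := fun y t => -(t*Real.sin (ph y t))) (x₀ := x')
    (μ := volume) (a := (0:ℝ)) (b := a) (bound := fun t => |a|)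
    (ball_mem_nhds x' (show (0:ℝ) < 1 by norm_num)) ?_ ?_ ?_ ?_ ?_ ?_
  · exact H.2
  · filter_upwards with y
    exact (cont_cos_ph y).aestronglyMeasurable
  · exact (cont_cos_ph x').intervalIntegrable _ _
  · exact (Continuous.aestronglyMeasurable (by unfold ph; fun_prop))
  · filter_upwards with t ht y _
    rw [Real.norm_eq_abs, abs_neg, abs_mul]
    rw [uIoc_of_le ha] at ht
    calc |t| * |Real.sin (ph y t)| ≤ |a| * 1 := by
          apply mul_le_mul ?_ (Real.abs_sin_le_one _) (abs_nonneg _) (abs_nonneg _)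
          rw [abs_of_nonneg (le_of_lt ht.1), abs_of_nonneg ha]
          exact ht.2
      _ = |a| := by ring
  · exact intervalIntegrable_const
  · filter_upwards with t _ y _
    have h2 := ((Real.hasDerivAt_cos (ph y t)).comp y (hphx y t))
    refine h2.congr_deriv ?_
    ring

lemma hasDerivAt_K1 {a : ℝ} (ha : 0 ≤ a) (x' : ℝ) :
    HasDerivAt (fun y => ∫ t in (0:ℝ)..a, -(t*Real.sin (ph y t)))
      (∫ t in (0:ℝ)..a, -(t^2*Real.cos (ph x' t))) x' := by
  have hphx : ∀ (y t : ℝ), HasDerivAt (fun x => ph x t) t y := by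
    intro y t
    have : HasDerivAt (fun x : ℝ => t^3/3 + x*t) (0 + 1*t) y :=
      (hasDerivAt_const y (t^3/3)).add ((hasDerivAt_id y).mul_const t)
    simpa [ph] using this
  have H := intervalIntegral.hasDerivAt_integral_of_dominated_loc_of_deriv_le
    (F := fun y t => -(t*Real.sin (ph y t))) (F' := fun y t => -(t^2*Real.cos (ph y t))) (x₀ := x')
    (μ := volume) (a := (0:ℝ)) (b := a) (bound := fun t => a^2)
    (ball_mem_nhds x' (show (0:ℝ) < 1 by norm_num)) ?_ ?_ ?_ ?_ ?_ ?_
  · exact H.2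
  · filter_upwards with y
    exact (Continuous.aestronglyMeasurable (by unfold ph; fun_prop))
  · apply Continuous.intervalIntegrable (by unfold ph; fun_prop)
  · exact (Continuous.aestronglyMeasurable (by unfold ph; fun_prop))
  · filter_upwards with t ht y _
    rw [Real.norm_eq_abs, abs_neg, abs_mul]
    rw [uIoc_of_le ha] at ht
    calc |t^2| * |Real.cos (ph y t)| ≤ a^2*1 := by
          apply mul_le_mul ?_ (Real.abs_cos_le_one _) (abs_nonneg _) (sq_nonneg _)
          rw [abs_of_nonneg (sq_nonneg t)]
          exact pow_le_pow_left₀ (le_of_lt ht.1) ht.2 2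
      _ = a^2 := by ring
  · exact intervalIntegrable_const
  · filter_upwards with t _ y _
    have h2 := (((Real.hasDerivAt_sin (ph y t)).comp y (hphx y t)).const_mul t).neg
    refine h2.congr_deriv ?_
    ring

end deriv



-- new pieces for the ODE

lemma integrableOn_g2 {a x M : ℝ} (ha : 0 ≤ a) (hx : 1 - 2*x ≤ a^2)
    (hM : |x| ≤ M) (hM1 : 1 ≤ M) : IntegrableOn (g2 x) (Ioi a) volume := by
  apply Integrable.mono' (integrable_bound (20000*M) a)
  · exact ((contOn_g2 (fun t ht => key_pos ha hx ht)).mono Ioi_subset_Ici_self).aestronglyMeasurable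
      measurableSet_Ioi
  · filter_upwards [ae_restrict_mem measurableSet_Ioi] with t ht
    rw [Real.norm_eq_abs]
    exact g2_bound (le_trans ha (le_of_lt ht)) (key_lb ha hx (le_of_lt ht)) hM hM1

lemma contOn_psi {a x : ℝ} (hpos : ∀ t, a ≤ t → 0 < t^2+x) :
    ContinuousOn (fun t => psi x t) (Ici a) := by
  have hne : ∀ t ∈ Ici a, ¬ t^2+x = 0 := fun t ht => (hpos t ht).ne'
  unfold psi ph
  apply ContinuousOn.add
  apply ContinuousOn.add
  · apply ContinuousOn.neg
    exact ContinuousOn.div (by fun_prop) (by fun_prop) (fun t ht => pow_ne_zero _ (hne t ht))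
  · exact ContinuousOn.div (by fun_prop) (by fun_prop) (fun t ht => pow_ne_zero _ (hne t ht))
  · exact ContinuousOn.div (by fun_prop) (by fun_prop) (fun t ht => pow_ne_zero _ (hne t ht))

lemma psi_tendsto_zero {a x : ℝ} (ha : 0 ≤ a) (hx : 1 - 2*x ≤ a^2) :
    Tendsto (fun t => psi x t) atTop (nhds 0) := by
  have hb : ∀ t, a ≤ t → |psi x t| ≤ 1000/(1+t^2) := by
    intro t ht
    have hle := key_lb ha hx ht
    have ht0 : 0 ≤ t := le_trans ha ht
    have h1 : |2*Real.sin (ph x t)/(t^2+x)^3| ≤ 2^3*2/(1+t^2) := by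
      apply atom (k := 0) (by norm_num) hle
      rw [abs_mul]
      calc |(2:ℝ)| * |Real.sin (ph x t)| ≤ 2*1 := by
            apply mul_le_mul (by norm_num) (Real.abs_sin_le_one _) (abs_nonneg _) (by norm_num)
        _ = 2*(1+t^2)^0 := by norm_num
    have h2 : |12*t^2*Real.sin (ph x t)/(t^2+x)^4| ≤ 2^4*12/(1+t^2) := by
      apply atom (k := 1) (by norm_num) hle
      rw [pow_one, abs_mul, abs_mul]
      calc |(12:ℝ)| * |t^2| * |Real.sin (ph x t)| ≤ 12*(1+t^2)*1 := by
            apply mul_le_mul ?_ (Real.abs_sin_le_one _) (abs_nonneg _) (by positivity)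
            rw [abs_of_nonneg (by norm_num : (0:ℝ) ≤ 12), abs_of_nonneg (sq_nonneg t)]
            nlinarith
        _ = 12*(1+t^2) := by ring
    have h3 : |24*t*Real.cos (ph x t)/(t^2+x)^5| ≤ 2^5*24/(1+t^2) := by
      apply atom (k := 1) (by norm_num) hle
      rw [pow_one, abs_mul, abs_mul]
      calc |(24:ℝ)| * |t| * |Real.cos (ph x t)| ≤ 24*(1+t^2)*1 := by
            apply mul_le_mul ?_ (Real.abs_cos_le_one _) (abs_nonneg _) (by positivity)
            rw [abs_of_nonneg (by norm_num : (0:ℝ) ≤ 24), abs_of_nonneg ht0]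
            nlinarith
        _ = 24*(1+t^2) := by ring
    calc |psi x t| ≤ |2*Real.sin (ph x t)/(t^2+x)^3|
          + |12*t^2*Real.sin (ph x t)/(t^2+x)^4| + |24*t*Real.cos (ph x t)/(t^2+x)^5| := by
          rw [psi]
          refine le_trans (abs_add_le _ _) (add_le_add (le_trans (abs_add_le _ _)
            (add_le_add (by rw [abs_neg]) le_rfl)) le_rfl)
      _ ≤ 2^3*2/(1+t^2) + 2^4*12/(1+t^2) + 2^5*24/(1+t^2) := by
          exact add_le_add (add_le_add h1 h2) h3
      _ ≤ 1000/(1+t^2) := by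
          rw [← add_div, ← add_div]
          apply div_le_div₀ (by norm_num) (by norm_num) (by positivity) le_rfl
  have hlim : Tendsto (fun t : ℝ => 1000/(1+t^2)) atTop (nhds 0) := by
    apply Tendsto.div_atTop tendsto_const_nhds
    apply tendsto_atTop_add_const_left
    exact (tendsto_pow_atTop (by norm_num)).comp tendsto_id
  have hlim' : Tendsto (fun t : ℝ => -(1000/(1+t^2))) atTop (nhds 0) := by simpa using hlim.neg
  apply tendsto_of_tendsto_of_tendsto_of_le_of_le' hlim' hlim
  · filter_upwards [eventually_ge_atTop a] with t ht
    exact neg_le_of_abs_le (hb t ht)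
  · filter_upwards [eventually_ge_atTop a] with t ht
    exact le_of_abs_le (hb t ht)

-- (C): ∫_{Ioi a} (g2 - x g0) = - psi x a
lemma tail_identity {a x M : ℝ} (ha : 0 ≤ a) (hx : 1 - 2*x ≤ a^2)
    (hM : |x| ≤ M) (hM1 : 1 ≤ M) :
    (∫ t in Ioi a, g2 x t) - x * (∫ t in Ioi a, g0 x t) = - psi x a := by
  have hpos : ∀ t, a ≤ t → 0 < t^2+x := fun t ht => key_pos ha hx ht
  have hint : IntegrableOn (fun t => g2 x t - x * g0 x t) (Ioi a) volume :=
    (integrableOn_g2 ha hx hM hM1).sub ((integrableOn_g0 ha hx hM hM1).const_mul x)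
  have hftc : ∫ t in Ioi a, (g2 x t - x * g0 x t) = 0 - psi x a := by
    apply integral_Ioi_of_hasDerivAt_of_tendsto
    · exact ((contOn_psi hpos) a self_mem_Ici)
    · intro t ht
      exact hasDerivAt_psi_t x t (hpos t (le_of_lt ht)).ne'
    · exact hint
    · exact psi_tendsto_zero ha hx
  rw [integral_sub (integrableOn_g2 ha hx hM hM1)
    ((integrableOn_g0 ha hx hM hM1).const_mul x), MeasureTheory.integral_const_mul] at hftc
  linarith [hftc]

-- (A): ∫_0^a -(t^2 cos) - x ∫_0^a cos = - sin(ph x a)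
lemma head_identity (a x : ℝ) :
    (∫ t in (0:ℝ)..a, -(t^2*Real.cos (ph x t))) - x * (∫ t in (0:ℝ)..a, Real.cos (ph x t))
      = - Real.sin (ph x a) := by
  have h1 : IntervalIntegrable (fun t => -(t^2*Real.cos (ph x t))) volume 0 a := by
    apply Continuous.intervalIntegrable (by unfold ph; fun_prop)
  have h2 : IntervalIntegrable (fun t => x * Real.cos (ph x t)) volume 0 a :=
    ((continuous_const.mul (cont_cos_ph x))).intervalIntegrable _ _
  have hftc : ∫ t in (0:ℝ)..a, (t^2+x) * Real.cos (ph x t)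
      = Real.sin (ph x a) - Real.sin (ph x 0) := by
    apply integral_eq_sub_of_hasDerivAt (fun t _ => hasDerivAt_sin_ph_t x t)
    apply Continuous.intervalIntegrable (by unfold ph; fun_prop)
  have h0 : Real.sin (ph x 0) = 0 := by simp [ph]
  have hsum : (∫ t in (0:ℝ)..a, -(t^2*Real.cos (ph x t))) - x * (∫ t in (0:ℝ)..a, Real.cos (ph x t))
      = - ∫ t in (0:ℝ)..a, (t^2+x) * Real.cos (ph x t) := by
    rw [← intervalIntegral.integral_const_mul, ← intervalIntegral.integral_sub h1 h2,
      ← intervalIntegral.integral_neg]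
    congr 1; funext t; ring
  rw [hsum, hftc, h0]; ring

-- THE MASTER LOCAL LEMMA
lemma airy_loc (Ai : ℝ → ℝ)
    (hAi : ∀ x : ℝ,
      Tendsto (fun R : ℝ => ∫ t in (0:ℝ)..R, Real.cos (t ^ 3 / 3 + x * t))
        atTop (nhds (Real.pi * Ai x)))
    (x₀ a : ℝ) (ha : 0 ≤ a) (ha3 : 3-2*x₀ ≤ a^2) :
    HasDerivAt Ai (deriv Ai x₀) x₀ ∧ HasDerivAt (deriv Ai) (x₀ * Ai x₀) x₀ ∧
    Real.pi * Ai x₀ = (∫ t in (0:ℝ)..a, Real.cos (ph x₀ t)) - bd x₀ a + (∫ t in Ioi a, g0 x₀ t) ∧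
    Real.pi * deriv Ai x₀
      = (∫ t in (0:ℝ)..a, -(t*Real.sin (ph x₀ t))) - bd1 x₀ a + ∫ t in Ioi a, g1 x₀ t := by
  have hπ : Real.pi ≠ 0 := Real.pi_ne_zero
  set M : ℝ := |x₀| + 1 with hMdef
  have hM1 : (1:ℝ) ≤ M := by rw [hMdef]; linarith [abs_nonneg x₀]
  have hcond : ∀ x' ∈ ball x₀ (1/2), 1 - 2*x' ≤ a^2 ∧ |x'| ≤ M := by
    intro x' hx'
    rw [mem_ball, Real.dist_eq] at hx'
    have h1 := abs_lt.1 hx'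
    have h4 := neg_abs_le x₀
    have h5 := le_abs_self x₀
    constructor
    · nlinarith
    · rw [hMdef, abs_le]; constructor <;> nlinarith
  -- the representation on the ball
  have hrep : ∀ x' ∈ ball x₀ (1/2), Real.pi * Ai x'
      = (∫ t in (0:ℝ)..a, Real.cos (ph x' t)) - bd x' a + ∫ t in Ioi a, g0 x' t := by
    intro x' hx'
    obtain ⟨hc1, hc2⟩ := hcond x' hx'
    apply representation ha hc1 hc2 hM1
    have := hAi x'
    simpa [ph] using this
  have hAirep : ∀ x' ∈ ball x₀ (1/2), Ai x'
      = ((∫ t in (0:ℝ)..a, Real.cos (ph x' t)) - bd x' a + ∫ t in Ioi a, g0 x' t)/Real.pi := by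
    intro x' hx'
    rw [eq_div_iff hπ, mul_comm]
    exact hrep x' hx'
  have hDne : ∀ x' ∈ ball x₀ (1/2), a^2 + x' ≠ 0 := by
    intro x' hx'
    exact (key_pos ha (hcond x' hx').1 le_rfl).ne'
  -- derivative of F on the ball
  have hF : ∀ x' ∈ ball x₀ (1/2),
      HasDerivAt (fun y => (∫ t in (0:ℝ)..a, Real.cos (ph y t)) - bd y a + ∫ t in Ioi a, g0 y t)
        ((∫ t in (0:ℝ)..a, -(t*Real.sin (ph x' t))) - bd1 x' a + ∫ t in Ioi a, g1 x' t) x' := by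
    intro x' hx'
    exact ((hasDerivAt_K ha x').sub (hasDerivAt_bd_x x' a (hDne x' hx'))).add
      (hasDerivAt_J ha ha3 hx')
  -- Ai differentiable on the ball, with explicit derivative
  have hAi' : ∀ x' ∈ ball x₀ (1/2), HasDerivAt Ai
      (((∫ t in (0:ℝ)..a, -(t*Real.sin (ph x' t))) - bd1 x' a + ∫ t in Ioi a, g1 x' t)/Real.pi) x' := by
    intro x' hx'
    apply HasDerivAt.congr_of_eventuallyEq ((hF x' hx').div_const Real.pi)
    filter_upwards [isOpen_ball.mem_nhds hx'] with y hy
    exact hAirep y hy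
  have hx₀ball : x₀ ∈ ball x₀ (1/2) := mem_ball_self (by norm_num)
  have hderiv_eq : ∀ x' ∈ ball x₀ (1/2), deriv Ai x'
      = ((∫ t in (0:ℝ)..a, -(t*Real.sin (ph x' t))) - bd1 x' a + ∫ t in Ioi a, g1 x' t)/Real.pi := by
    intro x' hx'
    exact (hAi' x' hx').deriv
  -- second derivative
  have hF1 : HasDerivAt
      (fun y => (∫ t in (0:ℝ)..a, -(t*Real.sin (ph y t))) - bd1 y a + ∫ t in Ioi a, g1 y t)
      ((∫ t in (0:ℝ)..a, -(t^2*Real.cos (ph x₀ t))) - bd2 x₀ a + ∫ t in Ioi a, g2 x₀ t) x₀ :=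
    ((hasDerivAt_K1 ha x₀).sub (hasDerivAt_bd1_x x₀ a (hDne x₀ hx₀ball))).add
      (hasDerivAt_J1 ha ha3 hx₀ball)
  have hd2 : HasDerivAt (deriv Ai)
      (((∫ t in (0:ℝ)..a, -(t^2*Real.cos (ph x₀ t))) - bd2 x₀ a + ∫ t in Ioi a, g2 x₀ t)/Real.pi) x₀ := by
    apply HasDerivAt.congr_of_eventuallyEq (hF1.div_const Real.pi)
    filter_upwards [isOpen_ball.mem_nhds hx₀ball] with y hy
    exact hderiv_eq y hy
  -- the algebraic identity: F2 = x₀ * F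
  obtain ⟨hc1, hc2⟩ := hcond x₀ hx₀ball
  have hident : (∫ t in (0:ℝ)..a, -(t^2*Real.cos (ph x₀ t))) - bd2 x₀ a + ∫ t in Ioi a, g2 x₀ t
      = x₀ * ((∫ t in (0:ℝ)..a, Real.cos (ph x₀ t)) - bd x₀ a + ∫ t in Ioi a, g0 x₀ t) := by
    have hhead := head_identity a x₀
    have hbd := bd2_identity x₀ a (hDne x₀ hx₀ball)
    have htail := tail_identity ha hc1 hc2 hM1
    nlinarith [hhead, hbd, htail]
  refine ⟨(hAi' x₀ hx₀ball).differentiableAt.hasDerivAt, ?_, hrep x₀ hx₀ball, ?_⟩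
  · have := hd2
    rw [hident] at this
    have heq : x₀ * ((∫ t in (0:ℝ)..a, Real.cos (ph x₀ t)) - bd x₀ a + ∫ t in Ioi a, g0 x₀ t)/Real.pi
        = x₀ * Ai x₀ := by
      rw [← hrep x₀ hx₀ball]
      field_simp
    rwa [heq] at this
  · rw [hderiv_eq x₀ hx₀ball]
    field_simp




section consequences
variable (Ai : ℝ → ℝ)
    (hAi : ∀ x : ℝ,
      Tendsto (fun R : ℝ => ∫ t in (0:ℝ)..R, Real.cos (t ^ 3 / 3 + x * t))
        atTop (nhds (Real.pi * Ai x)))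

include hAi in
lemma airy_everywhere (x₀ : ℝ) :
    HasDerivAt Ai (deriv Ai x₀) x₀ ∧ HasDerivAt (deriv Ai) (x₀ * Ai x₀) x₀ := by
  set a := Real.sqrt (max 0 (3-2*x₀)) with hadef
  have ha : 0 ≤ a := Real.sqrt_nonneg _
  have ha3 : 3-2*x₀ ≤ a^2 := by
    rw [hadef, Real.sq_sqrt (le_max_left _ _)]
    exact le_max_right _ _
  obtain ⟨h1, h2, _, _⟩ := airy_loc Ai hAi x₀ a ha ha3
  exact ⟨h1, h2⟩

include hAi in
lemma airy_rep_far {y : ℝ} (hy : 2 ≤ y) :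
    Real.pi * Ai y = (∫ t in Ioi (0:ℝ), g0 y t) ∧
    Real.pi * deriv Ai y = ∫ t in Ioi (0:ℝ), g1 y t := by
  obtain ⟨_, _, h3, h4⟩ := airy_loc Ai hAi y 0 le_rfl (by nlinarith)
  have hbd : bd y 0 = 0 := by simp [bd, ph]
  have hbd1 : bd1 y 0 = 0 := by simp [bd1, ph]
  simp only [intervalIntegral.integral_same] at h3 h4
  constructor
  · rw [h3, hbd]; ring
  · rw [h4, hbd1]; ring

include hAi in
lemma Ai_decay {y : ℝ} (hy : 2 ≤ y) : |Ai y| ≤ 5/y^2 := by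
  have h := (airy_rep_far Ai hAi hy).1
  have hy0 : (0:ℝ) < y := by linarith
  have hb : ‖∫ t in Ioi (0:ℝ), g0 y t‖ ≤ ∫ t in Ioi (0:ℝ), 10/y^2*(1+t^2)⁻¹ := by
    apply MeasureTheory.norm_integral_le_of_norm_le
    · have := (integrable_inv_one_add_sq.const_mul (10/y^2)).integrableOn (s := Ioi 0)
      exact this
    · filter_upwards [ae_restrict_mem measurableSet_Ioi] with t ht
      rw [Real.norm_eq_abs]
      calc |g0 y t| ≤ 10/(y^2*(1+t^2)) := g0_decay hy (le_of_lt ht)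
        _ = 10/y^2*(1+t^2)⁻¹ := by field_simp
  have hval : ∫ t in Ioi (0:ℝ), 10/y^2*(1+t^2)⁻¹ = 10/y^2*(Real.pi/2) := by
    rw [MeasureTheory.integral_const_mul, integral_Ioi_inv_one_add_sq]
    simp
  rw [hval] at hb
  have habs : |Real.pi * Ai y| ≤ 10/y^2*(Real.pi/2) := by
    rw [h, ← Real.norm_eq_abs]; exact hb
  rw [abs_mul, abs_of_pos Real.pi_pos] at habs
  have hπ := Real.pi_pos
  have h5 : (10/y^2*(Real.pi/2))*y^2 = 5*Real.pi := by field_simp; ring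
  have h6 := mul_le_mul_of_nonneg_right habs (sq_nonneg y)
  rw [h5] at h6
  rw [le_div_iff₀ (by positivity : (0:ℝ) < y^2)]
  nlinarith [h6, hπ]

include hAi in
lemma dAi_decay {y : ℝ} (hy : 2 ≤ y) : |deriv Ai y| ≤ 26/y := by
  have h := (airy_rep_far Ai hAi hy).2
  have hy0 : (0:ℝ) < y := by linarith
  have hb : ‖∫ t in Ioi (0:ℝ), g1 y t‖ ≤ ∫ t in Ioi (0:ℝ), 52/y*(1+t^2)⁻¹ := by
    apply MeasureTheory.norm_integral_le_of_norm_le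
    · exact (integrable_inv_one_add_sq.const_mul (52/y)).integrableOn (s := Ioi 0)
    · filter_upwards [ae_restrict_mem measurableSet_Ioi] with t ht
      rw [Real.norm_eq_abs]
      calc |g1 y t| ≤ 52/(y*(1+t^2)) := g1_decay hy (le_of_lt ht)
        _ = 52/y*(1+t^2)⁻¹ := by field_simp
  have hval : ∫ t in Ioi (0:ℝ), 52/y*(1+t^2)⁻¹ = 52/y*(Real.pi/2) := by
    rw [MeasureTheory.integral_const_mul, integral_Ioi_inv_one_add_sq]
    simp
  rw [hval] at hb
  have habs : |Real.pi * deriv Ai y| ≤ 52/y*(Real.pi/2) := by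
    rw [h, ← Real.norm_eq_abs]; exact hb
  rw [abs_mul, abs_of_pos Real.pi_pos] at habs
  have hπ := Real.pi_pos
  have h5 : (52/y*(Real.pi/2))*y = 26*Real.pi := by field_simp; ring
  have h6 := mul_le_mul_of_nonneg_right habs (by linarith : (0:ℝ) ≤ y)
  rw [h5] at h6
  rw [le_div_iff₀ (by positivity : (0:ℝ) < y)]
  nlinarith [h6, hπ]

end consequences

variable (Ai : ℝ → ℝ)
    (hAi : ∀ x : ℝ,
      Tendsto (fun R : ℝ => ∫ t in (0:ℝ)..R, Real.cos (t ^ 3 / 3 + x * t))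
        atTop (nhds (Real.pi * Ai x)))


include hAi in
theorem stmt_1' (x s : ℝ) :
    IntegrableOn (fun u => Ai (x + u) ^ 2) (Set.Ioi s) ∧
    ∫ u in Set.Ioi s, Ai (x + u) ^ 2 =
      (deriv Ai (x + s)) ^ 2 - (x + s) * Ai (x + s) ^ 2 := by
  have hd1 : ∀ v, HasDerivAt Ai (deriv Ai v) v := fun v => (airy_everywhere Ai hAi v).1
  have hd2 : ∀ v, HasDerivAt (deriv Ai) (v * Ai v) v := fun v => (airy_everywhere Ai hAi v).2
  have hcA : Continuous Ai := by
    rw [continuous_iff_continuousAt]; exact fun v => (hd1 v).continuousAt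
  have hcA' : Continuous (deriv Ai) := by
    rw [continuous_iff_continuousAt]; exact fun v => (hd2 v).continuousAt
  -- G and its derivative
  set G : ℝ → ℝ := fun u => (deriv Ai (x+u))^2 - (x+u) * (Ai (x+u))^2 with hGdef
  have hshift : ∀ u : ℝ, HasDerivAt (fun u : ℝ => x + u) 1 u := fun u =>
    (hasDerivAt_id u).const_add x
  have hGderiv : ∀ u : ℝ, HasDerivAt G (-(Ai (x+u)^2)) u := by
    intro u
    have hA : HasDerivAt (fun u => Ai (x+u)) (deriv Ai (x+u) * 1) u :=
      (hd1 (x+u)).comp u (hshift u)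
    have hA' : HasDerivAt (fun u => deriv Ai (x+u)) ((x+u) * Ai (x+u) * 1) u :=
      (hd2 (x+u)).comp u (hshift u)
    have h1 : HasDerivAt (fun u => (deriv Ai (x+u))^2)
        (2*(deriv Ai (x+u))^1*((x+u) * Ai (x+u) * 1)) u := by
      simpa using hA'.fun_pow 2
    have h2 : HasDerivAt (fun u => (x+u) * (Ai (x+u))^2)
        (1*(Ai (x+u))^2 + (x+u)*(2*(Ai (x+u))^1*(deriv Ai (x+u) * 1))) u := by
      have hp : HasDerivAt (fun u => (Ai (x+u))^2) (2*(Ai (x+u))^1*(deriv Ai (x+u) * 1)) u := by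
        simpa using hA.fun_pow 2
      exact (hshift u).mul hp
    have h := h1.sub h2
    refine h.congr_deriv ?_
    ring
  -- integrability of Ai(x+u)^2 on Ioi s
  set m : ℝ := max s (2 - x) with hmdef
  have hsm : s ≤ m := le_max_left _ _
  have hint : IntegrableOn (fun u => Ai (x + u) ^ 2) (Set.Ioi s) := by
    have hunion : Set.Ioc s m ∪ Set.Ioi m = Set.Ioi s := Set.Ioc_union_Ioi_eq_Ioi hsm
    rw [← hunion]
    apply IntegrableOn.union
    · apply Continuous.integrableOn_Ioc
      fun_prop
    · set K : ℝ := 25*(1+(1+|x|)^2) with hKdef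
      have hK0 : 0 < K := by positivity
      apply Integrable.mono' ((integrable_inv_one_add_sq.const_mul K).integrableOn (s := Set.Ioi m))
      · apply Continuous.aestronglyMeasurable; fun_prop
      · filter_upwards [ae_restrict_mem measurableSet_Ioi] with u hu
        have hxu : 2 ≤ x + u := by
          have : 2 - x < u := lt_of_le_of_lt (le_max_right s (2-x)) hu
          linarith
        have hxu0 : (0:ℝ) < x + u := by linarith
        have hAib := Ai_decay Ai hAi hxu
        have h1 : Ai (x+u)^2 ≤ 25/(x+u)^4 := by
          have := sq_le_sq' (neg_le_of_abs_le hAib) (le_of_abs_le hAib)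
          calc Ai (x+u)^2 ≤ (5/(x+u)^2)^2 := this
            _ = 25/(x+u)^4 := by rw [div_pow]; congr 1 <;> ring
        have hub : u ≤ (x+u)*(1+|x|) := by
          nlinarith [abs_nonneg x, le_abs_self x, neg_abs_le x]
        have hub2 : -u ≤ (x+u)*(1+|x|) := by
          nlinarith [abs_nonneg x, le_abs_self x, neg_abs_le x]
        have hkey : 1+u^2 ≤ (1+(1+|x|)^2)*(x+u)^4 := by
          have h4 : (x+u)^2 ≥ 4 := by nlinarith
          have h5 : u^2 ≤ (1+|x|)^2*(x+u)^2 := by nlinarith [hub, hub2]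
          nlinarith [sq_nonneg (x+u), sq_nonneg ((x+u)^2), abs_nonneg x, sq_nonneg (1+|x|)]
        rw [Real.norm_eq_abs, abs_of_nonneg (sq_nonneg _)]
        calc Ai (x+u)^2 ≤ 25/(x+u)^4 := h1
          _ ≤ K/(1+u^2) := by
              rw [hKdef, div_le_div_iff₀ (by positivity) (by positivity)]
              nlinarith [hkey]
          _ = K*(1+u^2)⁻¹ := div_eq_mul_inv _ _
    -- end union
  -- G tends to 0 at infinity
  have hG0 : Tendsto G atTop (nhds 0) := by
    have hb : ∀ u : ℝ, 2 - x ≤ u → |G u| ≤ 701/(x+u)^2 := by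
      intro u hu
      have hxu : 2 ≤ x + u := by linarith
      have hxu0 : (0:ℝ) < x + u := by linarith
      have h1 := dAi_decay Ai hAi hxu
      have h2 := Ai_decay Ai hAi hxu
      have hd : (deriv Ai (x+u))^2 ≤ 676/(x+u)^2 := by
        calc (deriv Ai (x+u))^2 ≤ (26/(x+u))^2 :=
              sq_le_sq' (neg_le_of_abs_le h1) (le_of_abs_le h1)
          _ = 676/(x+u)^2 := by rw [div_pow]; norm_num
      have ha : (x+u)*(Ai (x+u))^2 ≤ 25/(x+u)^2 := by
        have : Ai (x+u)^2 ≤ 25/(x+u)^4 := by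
          calc Ai (x+u)^2 ≤ (5/(x+u)^2)^2 := sq_le_sq' (neg_le_of_abs_le h2) (le_of_abs_le h2)
            _ = 25/(x+u)^4 := by rw [div_pow]; congr 1 <;> ring
        calc (x+u)*(Ai (x+u))^2 ≤ (x+u)*(25/(x+u)^4) :=
              mul_le_mul_of_nonneg_left this (by linarith)
          _ = 25/(x+u)^3 := by field_simp
          _ ≤ 25/(x+u)^2 := by
              apply div_le_div_of_nonneg_left (by norm_num) (by positivity)
              nlinarith
      have hG : |G u| ≤ 701/(x+u)^2 := by
        rw [hGdef]
        have hnonneg : 0 ≤ (x+u)*(Ai (x+u))^2 := by positivity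
        rw [abs_le]
        constructor
        · have : (0:ℝ) ≤ (deriv Ai (x+u))^2 := sq_nonneg _
          have h701 : (x+u)*(Ai (x+u))^2 ≤ 701/(x+u)^2 := by
            calc (x+u)*(Ai (x+u))^2 ≤ 25/(x+u)^2 := ha
              _ ≤ 701/(x+u)^2 := by gcongr <;> norm_num
          simp only
          nlinarith
        · have h701 : (deriv Ai (x+u))^2 ≤ 701/(x+u)^2 := by
            calc (deriv Ai (x+u))^2 ≤ 676/(x+u)^2 := hd
              _ ≤ 701/(x+u)^2 := by gcongr <;> norm_num
          simp only
          nlinarith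
      exact hG
    have hlim : Tendsto (fun u : ℝ => 701/(x+u)^2) atTop (nhds 0) := by
      apply Tendsto.div_atTop tendsto_const_nhds
      have h1 : Tendsto (fun u : ℝ => x + u) atTop atTop :=
        tendsto_atTop_add_const_left _ x tendsto_id
      exact (tendsto_pow_atTop (two_ne_zero)).comp h1
    have hlim' : Tendsto (fun u : ℝ => -(701/(x+u)^2)) atTop (nhds 0) := by simpa using hlim.neg
    apply tendsto_of_tendsto_of_tendsto_of_le_of_le' hlim' hlim
    · filter_upwards [eventually_ge_atTop (2-x)] with u hu
      exact neg_le_of_abs_le (hb u hu)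
    · filter_upwards [eventually_ge_atTop (2-x)] with u hu
      exact le_of_abs_le (hb u hu)
  -- FTC
  have hftc : ∫ u in Set.Ioi s, -(Ai (x+u)^2) = 0 - G s := by
    apply integral_Ioi_of_hasDerivAt_of_tendsto
    · exact Continuous.continuousWithinAt (by fun_prop)
    · exact fun u _ => hGderiv u
    · exact hint.neg
    · exact hG0
  refine ⟨hint, ?_⟩
  rw [MeasureTheory.integral_neg] at hftc
  have : ∫ u in Set.Ioi s, Ai (x+u)^2 = G s := by linarith
  rw [this, hGdef]


end AiryProofWork

/-- For all real `x` and `s`, the integral `∫_s^∞ Ai(x+u)² du`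
converges and equals `(Ai'(x+s))² − (x+s)·Ai(x+s)²`.
Here `Ai` is the Airy function, characterized by
`π·Ai(x) = lim_{R→∞} ∫₀^R cos(t³/3 + x·t) dt`, and `Ai' = deriv Ai`. -/
theorem stmt_1 (Ai : ℝ → ℝ)
    (hAi : ∀ x : ℝ,
      Tendsto (fun R : ℝ => ∫ t in (0:ℝ)..R, Real.cos (t ^ 3 / 3 + x * t))
        atTop (nhds (Real.pi * Ai x)))
    (x s : ℝ) :
    IntegrableOn (fun u => Ai (x + u) ^ 2) (Set.Ioi s) ∧
    ∫ u in Set.Ioi s, Ai (x + u) ^ 2 =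
      (deriv Ai (x + s)) ^ 2 - (x + s) * Ai (x + s) ^ 2 := by
  exact stmt_1' Ai hAi x s
end

section
/- The kernel K_σ is Hermitian positive semidefinite: for every n ∈ ℕ, every x : Fin n → ℝ and every z : Fin n → ℂ, the complex number Σ_{i,j} z(i)·conj(z(j))·K_σ(x(i), x(j)) has imaginary part equal to 0 and real part ≥ 0. -/
open MeasureTheory Filter

/-- The Amir–Corwin–Quastel double-integral Airy kernel
`K_σ(x,y) = ∫_ℝ (∫₀^∞ Ai(x+t+u)·Ai(y+t+u) du) dσ(t)`. -/
noncomputable def Ksig (Ai : ℝ → ℝ) (σ : Measure ℝ) (x y : ℝ) : ℝ :=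
  ∫ t, (∫ u in Set.Ioi (0 : ℝ), Ai (x + t + u) * Ai (y + t + u)) ∂σ

set_option maxHeartbeats 1000000 in

lemma airy_abs_bound (Ai : ℝ → ℝ)
    (hAi : ∀ x : ℝ,
      Tendsto (fun R : ℝ => ∫ t in (0:ℝ)..R, Real.cos (t ^ 3 / 3 + x * t))
        atTop (nhds (Real.pi * Ai x))) (x : ℝ) :
    |Ai x| ≤ Real.sqrt (|x| + 1) + 3 := by
  set T := Real.sqrt (|x| + 1) with hT
  have hT0 : 0 ≤ T := Real.sqrt_nonneg _
  have hT2 : T ^ 2 = |x| + 1 := Real.sq_sqrt (by positivity)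
  have hcont : Continuous fun t : ℝ => Real.cos (t ^ 3 / 3 + x * t) := by
    apply Real.continuous_cos.comp; continuity
  have hpos : ∀ t : ℝ, T ≤ t → 1 ≤ t ^ 2 + x := by
    intro t ht
    have h1 : T ^ 2 ≤ t ^ 2 := by nlinarith
    have h2 := neg_abs_le x
    nlinarith
  have key : ∀ R : ℝ, T ≤ R → |∫ t in (0:ℝ)..R, Real.cos (t ^ 3 / 3 + x * t)| ≤ T + 3 := by
    intro R hTR
    have hφ : ∀ t : ℝ, HasDerivAt (fun s : ℝ => s ^ 3 / 3 + x * s) (t ^ 2 + x) t := by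
      intro t
      have h1 : HasDerivAt (fun s : ℝ => s ^ 3 / 3) (t ^ 2) t := by
        have := (hasDerivAt_pow 3 t).div_const 3
        exact this.congr_deriv (by norm_num)
      have h2 : HasDerivAt (fun s : ℝ => x * s) x t := by
        simpa using (hasDerivAt_id t).const_mul x
      exact h1.add h2
    have hψ : ∀ t : ℝ, HasDerivAt (fun s : ℝ => s ^ 2 + x) (2 * t) t := by
      intro t
      have h1 : HasDerivAt (fun s : ℝ => s ^ 2) (2 * t) t := by
        simpa using hasDerivAt_pow 2 t
      simpa using h1.add_const x
    have hh : ∀ t : ℝ, T ≤ t →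
        HasDerivAt (fun s : ℝ => Real.sin (s ^ 3 / 3 + x * s) / (s ^ 2 + x))
          (Real.cos (t ^ 3 / 3 + x * t) -
            Real.sin (t ^ 3 / 3 + x * t) * (2 * t / (t ^ 2 + x) ^ 2)) t := by
      intro t ht
      have hne : t ^ 2 + x ≠ 0 := by have := hpos t ht; linarith
      have hs : HasDerivAt (fun s : ℝ => Real.sin (s ^ 3 / 3 + x * s))
          (Real.cos (t ^ 3 / 3 + x * t) * (t ^ 2 + x)) t :=
        (Real.hasDerivAt_sin _).comp t (hφ t)
      have := hs.div (hψ t) hne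
      exact this.congr_deriv (by field_simp)
    have hie_err : IntervalIntegrable
        (fun t : ℝ => Real.sin (t ^ 3 / 3 + x * t) * (2 * t / (t ^ 2 + x) ^ 2)) volume T R := by
      apply ContinuousOn.intervalIntegrable
      rw [Set.uIcc_of_le hTR]
      apply ContinuousOn.mul (Continuous.continuousOn (by continuity))
      apply ContinuousOn.div (by fun_prop) (by fun_prop)
      intro t ht
      have := hpos t ht.1
      have h0 : (0:ℝ) < t ^ 2 + x := by linarith
      positivity
    have hkint : IntervalIntegrable (fun t : ℝ => 2 * t / (t ^ 2 + x) ^ 2) volume T R := by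
      apply ContinuousOn.intervalIntegrable
      rw [Set.uIcc_of_le hTR]
      apply ContinuousOn.div (by fun_prop) (by fun_prop)
      intro t ht
      have := hpos t ht.1
      have h0 : (0:ℝ) < t ^ 2 + x := by linarith
      positivity
    have hie_cos : IntervalIntegrable (fun t : ℝ => Real.cos (t ^ 3 / 3 + x * t)) volume T R := hcont.intervalIntegrable T R
    have hftc : ∫ t in T..R, (Real.cos (t ^ 3 / 3 + x * t) -
          Real.sin (t ^ 3 / 3 + x * t) * (2 * t / (t ^ 2 + x) ^ 2))
        = Real.sin (R ^ 3 / 3 + x * R) / (R ^ 2 + x)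
          - Real.sin (T ^ 3 / 3 + x * T) / (T ^ 2 + x) := by
      apply intervalIntegral.integral_eq_sub_of_hasDerivAt
      · intro t ht
        rw [Set.uIcc_of_le hTR] at ht
        exact hh t ht.1
      · exact hie_cos.sub hie_err
    have heq : ∫ t in T..R, Real.cos (t ^ 3 / 3 + x * t)
        = (Real.sin (R ^ 3 / 3 + x * R) / (R ^ 2 + x)
            - Real.sin (T ^ 3 / 3 + x * T) / (T ^ 2 + x))
          + ∫ t in T..R, Real.sin (t ^ 3 / 3 + x * t) * (2 * t / (t ^ 2 + x) ^ 2) := by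
      rw [← hftc, ← intervalIntegral.integral_add (hie_cos.sub hie_err) hie_err]
      congr 1
      funext t
      ring
    have hhb : ∀ t : ℝ, T ≤ t → |Real.sin (t ^ 3 / 3 + x * t) / (t ^ 2 + x)| ≤ 1 := by
      intro t ht
      have h1 := hpos t ht
      rw [abs_div, abs_of_pos (by linarith : (0:ℝ) < t ^ 2 + x), div_le_one (by linarith)]
      have := abs_le.2 ⟨Real.neg_one_le_sin (t ^ 3 / 3 + x * t), Real.sin_le_one _⟩
      linarith
    have hkeval : ∫ t in T..R, 2 * t / (t ^ 2 + x) ^ 2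
        = -(R ^ 2 + x)⁻¹ - -(T ^ 2 + x)⁻¹ := by
      apply intervalIntegral.integral_eq_sub_of_hasDerivAt
      · intro t ht
        rw [Set.uIcc_of_le hTR] at ht
        have hne : t ^ 2 + x ≠ 0 := by have := hpos t ht.1; linarith
        have := ((hψ t).inv hne).neg
        exact this.congr_deriv (by rw [neg_div, neg_neg])
      · exact hkint
    have herr : |∫ t in T..R, Real.sin (t ^ 3 / 3 + x * t) * (2 * t / (t ^ 2 + x) ^ 2)| ≤ 1 := by
      have h1 := intervalIntegral.abs_integral_le_integral_abs (f := fun t : ℝ =>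
        Real.sin (t ^ 3 / 3 + x * t) * (2 * t / (t ^ 2 + x) ^ 2)) (μ := volume) hTR
      have h2 : (∫ t in T..R, |Real.sin (t ^ 3 / 3 + x * t) * (2 * t / (t ^ 2 + x) ^ 2)|)
          ≤ ∫ t in T..R, 2 * t / (t ^ 2 + x) ^ 2 := by
        apply intervalIntegral.integral_mono_on hTR hie_err.abs hkint
        intro t ht
        have h3 := hpos t ht.1
        have h4 : 0 ≤ 2 * t / (t ^ 2 + x) ^ 2 := by
          apply div_nonneg (by linarith [hT0, ht.1]) (by positivity)
        rw [abs_mul]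
        have h5 : |2 * t / (t ^ 2 + x) ^ 2| = 2 * t / (t ^ 2 + x) ^ 2 := abs_of_nonneg h4
        have h6 := abs_le.2 ⟨Real.neg_one_le_sin (t ^ 3 / 3 + x * t), Real.sin_le_one _⟩
        nlinarith [abs_nonneg (Real.sin (t ^ 3 / 3 + x * t))]
      have h7 : (T ^ 2 + x)⁻¹ ≤ 1 := inv_le_one_of_one_le₀ (hpos T le_rfl)
      have h8 : 0 ≤ (R ^ 2 + x)⁻¹ := inv_nonneg.2 (by linarith [hpos R hTR])
      rw [hkeval] at h2
      calc |∫ t in T..R, Real.sin (t ^ 3 / 3 + x * t) * (2 * t / (t ^ 2 + x) ^ 2)|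
          ≤ ∫ t in T..R, |Real.sin (t ^ 3 / 3 + x * t) * (2 * t / (t ^ 2 + x) ^ 2)| := h1
        _ ≤ -(R ^ 2 + x)⁻¹ - -(T ^ 2 + x)⁻¹ := h2
        _ ≤ 1 := by linarith
    have hsplit : ∫ t in (0:ℝ)..R, Real.cos (t ^ 3 / 3 + x * t)
        = (∫ t in (0:ℝ)..T, Real.cos (t ^ 3 / 3 + x * t))
          + ∫ t in T..R, Real.cos (t ^ 3 / 3 + x * t) :=
      (intervalIntegral.integral_add_adjacent_intervals
        (hcont.intervalIntegrable 0 T) (hcont.intervalIntegrable T R)).symm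
    have hb1 : |∫ t in (0:ℝ)..T, Real.cos (t ^ 3 / 3 + x * t)| ≤ T := by
      have := intervalIntegral.norm_integral_le_of_norm_le_const (C := 1)
        (f := fun t : ℝ => Real.cos (t ^ 3 / 3 + x * t)) (a := 0) (b := T)
        (fun t _ => by simpa [Real.norm_eq_abs] using Real.abs_cos_le_one (t ^ 3 / 3 + x * t))
      simpa [Real.norm_eq_abs, abs_of_nonneg hT0] using this
    have hb2 : |∫ t in T..R, Real.cos (t ^ 3 / 3 + x * t)| ≤ 3 := by
      rw [heq]
      have h9 := hhb R hTR
      have h10 := hhb T le_rfl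
      calc |Real.sin (R ^ 3 / 3 + x * R) / (R ^ 2 + x)
            - Real.sin (T ^ 3 / 3 + x * T) / (T ^ 2 + x)
            + ∫ t in T..R, Real.sin (t ^ 3 / 3 + x * t) * (2 * t / (t ^ 2 + x) ^ 2)|
          ≤ |Real.sin (R ^ 3 / 3 + x * R) / (R ^ 2 + x)
            - Real.sin (T ^ 3 / 3 + x * T) / (T ^ 2 + x)|
            + |∫ t in T..R, Real.sin (t ^ 3 / 3 + x * t) * (2 * t / (t ^ 2 + x) ^ 2)| :=
            abs_add_le _ _
        _ ≤ (|Real.sin (R ^ 3 / 3 + x * R) / (R ^ 2 + x)|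
            + |Real.sin (T ^ 3 / 3 + x * T) / (T ^ 2 + x)|) + 1 := by
            have := abs_sub (Real.sin (R ^ 3 / 3 + x * R) / (R ^ 2 + x))
              (Real.sin (T ^ 3 / 3 + x * T) / (T ^ 2 + x))
            linarith [herr, abs_sub_abs_le_abs_sub (Real.sin (R ^ 3 / 3 + x * R) / (R ^ 2 + x))
              (Real.sin (T ^ 3 / 3 + x * T) / (T ^ 2 + x)),
              abs_sub_le_iff.1 (le_refl |Real.sin (R ^ 3 / 3 + x * R) / (R ^ 2 + x)
                - Real.sin (T ^ 3 / 3 + x * T) / (T ^ 2 + x)|)]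
        _ ≤ 3 := by linarith
    calc |∫ t in (0:ℝ)..R, Real.cos (t ^ 3 / 3 + x * t)|
        ≤ |∫ t in (0:ℝ)..T, Real.cos (t ^ 3 / 3 + x * t)|
          + |∫ t in T..R, Real.cos (t ^ 3 / 3 + x * t)| := by rw [hsplit]; exact abs_add_le _ _
      _ ≤ T + 3 := by linarith
  have habs := (hAi x).abs
  have hb : |Real.pi * Ai x| ≤ T + 3 := le_of_tendsto habs (eventually_atTop.2 ⟨T, key⟩)
  rw [abs_mul, abs_of_pos Real.pi_pos] at hb
  nlinarith [Real.pi_gt_three, abs_nonneg (Ai x)]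


lemma airy_measurable (Ai : ℝ → ℝ)
    (hAi : ∀ x : ℝ,
      Tendsto (fun R : ℝ => ∫ t in (0:ℝ)..R, Real.cos (t ^ 3 / 3 + x * t))
        atTop (nhds (Real.pi * Ai x))) :
    Measurable Ai := by
  have hm : ∀ m : ℕ, Measurable fun x : ℝ => ∫ t in Set.Ioc (0:ℝ) m, Real.cos (t ^ 3 / 3 + x * t) := by
    intro m
    have hsm : StronglyMeasurable fun p : ℝ × ℝ => Real.cos (p.2 ^ 3 / 3 + p.1 * p.2) := by
      apply Continuous.stronglyMeasurable
      continuity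
    exact (hsm.integral_prod_right' (ν := volume.restrict (Set.Ioc (0:ℝ) m))).measurable
  have hlim : ∀ x : ℝ, Tendsto (fun m : ℕ => ∫ t in Set.Ioc (0:ℝ) m, Real.cos (t ^ 3 / 3 + x * t))
      atTop (nhds (Real.pi * Ai x)) := by
    intro x
    have h1 : Tendsto (fun m : ℕ => (m : ℝ)) atTop atTop := tendsto_natCast_atTop_atTop
    have h2 := (hAi x).comp h1
    have h3 : ∀ m : ℕ, (∫ t in (0:ℝ)..(m:ℝ), Real.cos (t ^ 3 / 3 + x * t))
        = ∫ t in Set.Ioc (0:ℝ) m, Real.cos (t ^ 3 / 3 + x * t) := fun m =>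
      intervalIntegral.integral_of_le (by positivity)
    exact h2.congr fun m => h3 m
  have hπ : Measurable fun x => Real.pi * Ai x :=
    measurable_of_tendsto_metrizable' atTop hm (tendsto_pi_nhds.2 hlim)
  have : Measurable fun x => Real.pi⁻¹ * (Real.pi * Ai x) := hπ.const_mul _
  simpa [← mul_assoc, inv_mul_cancel₀ Real.pi_ne_zero] using this

lemma shift_Ioi_integral (f : ℝ → ℝ) (c : ℝ) :
    ∫ u in Set.Ioi (0:ℝ), f (c + u) = ∫ v in Set.Ioi c, f v := by
  rw [← integral_indicator measurableSet_Ioi, ← integral_indicator measurableSet_Ioi]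
  have h1 : ∀ u : ℝ, (Set.Ioi (0:ℝ)).indicator (fun u => f (c + u)) u
      = (Set.Ioi c).indicator f (c + u) := by
    intro u
    simp only [Set.indicator_apply, Set.mem_Ioi, lt_add_iff_pos_right]
  simp_rw [h1]
  exact integral_add_left_eq_self (μ := volume) ((Set.Ioi c).indicator f) c

lemma shift_Ioi_integrableOn {f : ℝ → ℝ} {c : ℝ}
    (h : IntegrableOn (fun u => f (c + u)) (Set.Ioi (0:ℝ))) :
    IntegrableOn f (Set.Ioi c) := by
  have h' : Integrable ((Set.Ioi (0:ℝ)).indicator (fun u => f (c + u))) volume :=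
    (integrable_indicator_iff measurableSet_Ioi).2 h
  have h1 : ((Set.Ioi (0:ℝ)).indicator (fun u => f (c + u)))
      = fun u => (Set.Ioi c).indicator f (c + u) := by
    funext u
    simp only [Set.indicator_apply, Set.mem_Ioi, lt_add_iff_pos_right]
  rw [h1] at h'
  have h2 := h'.comp_add_left (-c)
  apply (integrable_indicator_iff measurableSet_Ioi).1
  have h3 : (fun u => (Set.Ioi c).indicator f (c + (-c + u)))
      = (Set.Ioi c).indicator f := by
    funext u
    simp [← add_assoc]
  rwa [h3] at h2


lemma diag_bound (Ai : ℝ → ℝ)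
    (hb : ∀ v : ℝ, Ai v ^ 2 ≤ 2 * |v| + 20)
    (hint : ∀ c : ℝ, IntegrableOn (fun v => Ai v ^ 2) (Set.Ioi c))
    (c : ℝ) :
    ∫ v in Set.Ioi c, Ai v ^ 2 ≤ (∫ v in Set.Ioi (0:ℝ), Ai v ^ 2) + (2 * |c| + 20) * |c| := by
  have hnn : ∀ v : ℝ, 0 ≤ Ai v ^ 2 := fun v => sq_nonneg _
  rcases le_total c 0 with hc | hc
  · have hsplit : Set.Ioc c 0 ∪ Set.Ioi (0:ℝ) = Set.Ioi c := Set.Ioc_union_Ioi_eq_Ioi hc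
    have hdisj : Disjoint (Set.Ioc c (0:ℝ)) (Set.Ioi (0:ℝ)) := Set.Ioc_disjoint_Ioi le_rfl
    have hi1 : IntegrableOn (fun v => Ai v ^ 2) (Set.Ioc c 0) :=
      (hint c).mono_set Set.Ioc_subset_Ioi_self
    have hi2 : IntegrableOn (fun v => Ai v ^ 2) (Set.Ioi (0:ℝ)) := hint 0
    have heq : ∫ v in Set.Ioi c, Ai v ^ 2
        = (∫ v in Set.Ioc c 0, Ai v ^ 2) + ∫ v in Set.Ioi (0:ℝ), Ai v ^ 2 := by
      rw [← hsplit, setIntegral_union hdisj measurableSet_Ioi hi1 hi2]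
    have hmono : ∫ v in Set.Ioc c 0, Ai v ^ 2 ≤ ∫ v in Set.Ioc c 0, (2 * |c| + 20) := by
      apply setIntegral_mono_on hi1 (integrableOn_const (by
        rw [Real.volume_Ioc]; exact ENNReal.ofReal_ne_top)) measurableSet_Ioc
      intro v hv
      have h1 : |v| ≤ |c| := by
        rw [abs_of_nonpos (hv.2), abs_of_nonpos hc]
        linarith [hv.1]
      have := hb v
      linarith
    have hconst : ∫ _v in Set.Ioc c 0, (2 * |c| + 20) = (2 * |c| + 20) * |c| := by
      rw [setIntegral_const, Measure.real, Real.volume_Ioc, ENNReal.toReal_ofReal (by linarith), smul_eq_mul]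
      rw [abs_of_nonpos hc]
      ring
    rw [heq]
    rw [hconst] at hmono
    linarith
  · have h1 : ∫ v in Set.Ioi c, Ai v ^ 2 ≤ ∫ v in Set.Ioi (0:ℝ), Ai v ^ 2 := by
      apply setIntegral_mono_set (hint 0) (Filter.Eventually.of_forall hnn)
      exact (Set.Ioi_subset_Ioi hc).eventuallyLE
    have h2 : 0 ≤ (2 * |c| + 20) * |c| := by positivity
    linarith

set_option maxHeartbeats 1000000 in
/-- The kernel `K_σ` is Hermitian positive semidefinite: for every
`n ∈ ℕ`, every `x : Fin n → ℝ` and every `z : Fin n → ℂ`, the complex number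
`Σ_{i,j} z(i)·conj(z(j))·K_σ(x(i), x(j))` has imaginary part `0` and real part `≥ 0`. -/
theorem stmt_6 (Ai : ℝ → ℝ)
    (hAi : ∀ x : ℝ,
      Tendsto (fun R : ℝ => ∫ t in (0:ℝ)..R, Real.cos (t ^ 3 / 3 + x * t))
        atTop (nhds (Real.pi * Ai x)))
    (σ : Measure ℝ) [IsProbabilityMeasure σ]
    (hmom : ∀ k : ℕ, Integrable (fun t => |t| ^ k) σ)
    (hinner : ∀ x y t : ℝ,
      IntegrableOn (fun u => Ai (x + t + u) * Ai (y + t + u)) (Set.Ioi 0))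
    (n : ℕ) (x : Fin n → ℝ) (z : Fin n → ℂ) :
    (∑ i : Fin n, ∑ j : Fin n,
        z i * (starRingEnd ℂ) (z j) * (Ksig Ai σ (x i) (x j) : ℂ)).im = 0 ∧
    0 ≤ (∑ i : Fin n, ∑ j : Fin n,
        z i * (starRingEnd ℂ) (z j) * (Ksig Ai σ (x i) (x j) : ℂ)).re := by
  have hAim : Measurable Ai := airy_measurable Ai hAi
  have hb2 : ∀ v : ℝ, Ai v ^ 2 ≤ 2 * |v| + 20 := by
    intro v
    have h := airy_abs_bound Ai hAi v
    have h3 : Real.sqrt (|v| + 1) ^ 2 = |v| + 1 := Real.sq_sqrt (by positivity)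
    have h4 : |Ai v| ^ 2 ≤ (Real.sqrt (|v| + 1) + 3) ^ 2 :=
      pow_le_pow_left₀ (abs_nonneg _) h 2
    rw [sq_abs] at h4
    nlinarith [sq_nonneg (Real.sqrt (|v| + 1) - 3), Real.sqrt_nonneg (|v| + 1)]
  have hsq : ∀ c : ℝ, IntegrableOn (fun v => Ai v ^ 2) (Set.Ioi c) := by
    intro c
    apply shift_Ioi_integrableOn
    have := hinner c c 0
    simpa [pow_two] using this
  set C0 : ℝ := ∫ v in Set.Ioi (0:ℝ), Ai v ^ 2 with hC0
  have hC0nn : 0 ≤ C0 := setIntegral_nonneg measurableSet_Ioi fun v _ => sq_nonneg _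
  set M : ℝ := ∑ i : Fin n, |x i| with hMdef
  have hM : ∀ i, |x i| ≤ M := fun i =>
    Finset.single_le_sum (fun j _ => abs_nonneg (x j)) (Finset.mem_univ i)
  have hM0 : 0 ≤ M := Finset.sum_nonneg fun j _ => abs_nonneg _
  have hdiag_int : ∀ (c t : ℝ), IntegrableOn (fun u => Ai (c + t + u) ^ 2) (Set.Ioi (0:ℝ)) := by
    intro c t
    simpa [pow_two] using hinner c c t
  have hdiagb : ∀ (c t : ℝ),
      (∫ u in Set.Ioi (0:ℝ), Ai (c + t + u) ^ 2) ≤ C0 + (2 * |c + t| + 20) * |c + t| := by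
    intro c t
    have he : (∫ u in Set.Ioi (0:ℝ), Ai (c + t + u) ^ 2)
        = ∫ v in Set.Ioi (c + t), Ai v ^ 2 := by
      simpa using shift_Ioi_integral (fun v => Ai v ^ 2) (c + t)
    rw [he]
    exact diag_bound Ai hb2 hsq (c + t)
  -- bound on the inner kernel
  have hgb : ∀ (i j : Fin n) (t : ℝ),
      |∫ u in Set.Ioi (0:ℝ), Ai (x i + t + u) * Ai (x j + t + u)|
        ≤ C0 + (2 * (M + |t|) + 20) * (M + |t|) := by
    intro i j t
    have h1 : |∫ u in Set.Ioi (0:ℝ), Ai (x i + t + u) * Ai (x j + t + u)|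
        ≤ ∫ u in Set.Ioi (0:ℝ), |Ai (x i + t + u)| * |Ai (x j + t + u)| := by
      simpa [Real.norm_eq_abs] using norm_integral_le_integral_norm
        (μ := volume.restrict (Set.Ioi 0))
        (fun u => Ai (x i + t + u) * Ai (x j + t + u))
    have habs : Integrable (fun u => |Ai (x i + t + u)| * |Ai (x j + t + u)|)
        (volume.restrict (Set.Ioi 0)) := by
      simpa [abs_mul] using (hinner (x i) (x j) t).abs
    have h2 : (∫ u in Set.Ioi (0:ℝ), |Ai (x i + t + u)| * |Ai (x j + t + u)|)
        ≤ ∫ u in Set.Ioi (0:ℝ), (Ai (x i + t + u) ^ 2 / 2 + Ai (x j + t + u) ^ 2 / 2) := by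
      apply integral_mono habs
        (((hdiag_int (x i) t).div_const 2).add ((hdiag_int (x j) t).div_const 2))
      intro u
      have hs := sq_nonneg (|Ai (x i + t + u)| - |Ai (x j + t + u)|)
      simp only [Pi.add_apply]
      nlinarith [sq_abs (Ai (x i + t + u)), sq_abs (Ai (x j + t + u))]
    have h3 : (∫ u in Set.Ioi (0:ℝ), (Ai (x i + t + u) ^ 2 / 2 + Ai (x j + t + u) ^ 2 / 2))
        = (∫ u in Set.Ioi (0:ℝ), Ai (x i + t + u) ^ 2) / 2
          + (∫ u in Set.Ioi (0:ℝ), Ai (x j + t + u) ^ 2) / 2 := by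
      rw [integral_add ((hdiag_int (x i) t).div_const 2) ((hdiag_int (x j) t).div_const 2),
        integral_div, integral_div]
    have h4 := hdiagb (x i) t
    have h5 := hdiagb (x j) t
    have hai : |x i + t| ≤ M + |t| :=
      le_trans (abs_add_le _ _) (add_le_add_left (hM i) _)
    have haj : |x j + t| ≤ M + |t| :=
      le_trans (abs_add_le _ _) (add_le_add_left (hM j) _)
    have hain := abs_nonneg (x i + t)
    have hajn := abs_nonneg (x j + t)
    have htn := abs_nonneg t
    nlinarith [h1, h2, h3]
  -- σ-integrability of the inner kernel
  have hgint : ∀ i j : Fin n, Integrable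
      (fun t => ∫ u in Set.Ioi (0:ℝ), Ai (x i + t + u) * Ai (x j + t + u)) σ := by
    intro i j
    have hmeas : AEStronglyMeasurable
        (fun t => ∫ u in Set.Ioi (0:ℝ), Ai (x i + t + u) * Ai (x j + t + u)) σ := by
      have hsm : StronglyMeasurable fun p : ℝ × ℝ => Ai (x i + p.1 + p.2) * Ai (x j + p.1 + p.2) := by
        apply Measurable.stronglyMeasurable
        exact (hAim.comp ((measurable_const.add measurable_fst).add measurable_snd)).mul
          (hAim.comp ((measurable_const.add measurable_fst).add measurable_snd))
      exact (hsm.integral_prod_right' (ν := volume.restrict (Set.Ioi 0))).aestronglyMeasurable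
    apply Integrable.mono' (g := fun t : ℝ => (C0 + 2 * M ^ 2 + 20 * M) * |t| ^ 0
        + (4 * M + 20) * |t| ^ 1 + 2 * |t| ^ 2)
      ((((hmom 0).const_mul _).add ((hmom 1).const_mul _)).add ((hmom 2).const_mul _)) hmeas
    apply Filter.Eventually.of_forall
    intro t
    rw [Real.norm_eq_abs]
    have := hgb i j t
    have htn := abs_nonneg t
    nlinarith
  -- the key pointwise identity in t
  have key : ∀ t : ℝ,
      (∑ i : Fin n, ∑ j : Fin n, z i * (starRingEnd ℂ) (z j)
          * ((∫ u in Set.Ioi (0:ℝ), Ai (x i + t + u) * Ai (x j + t + u) : ℝ) : ℂ))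
        = ((∫ u in Set.Ioi (0:ℝ),
            Complex.normSq (∑ i : Fin n, z i * (Ai (x i + t + u) : ℂ)) : ℝ) : ℂ) := by
    intro t
    have hint_u : ∀ i j : Fin n, Integrable
        (fun u => z i * (starRingEnd ℂ) (z j) * ((Ai (x i + t + u) * Ai (x j + t + u) : ℝ) : ℂ))
        (volume.restrict (Set.Ioi 0)) :=
      fun i j => ((hinner (x i) (x j) t).ofReal.const_mul _)
    have e1 : ∀ i j : Fin n, z i * (starRingEnd ℂ) (z j)
        * ((∫ u in Set.Ioi (0:ℝ), Ai (x i + t + u) * Ai (x j + t + u) : ℝ) : ℂ)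
        = ∫ u in Set.Ioi (0:ℝ),
            z i * (starRingEnd ℂ) (z j) * ((Ai (x i + t + u) * Ai (x j + t + u) : ℝ) : ℂ) := by
      intro i j
      rw [integral_const_mul]
      congr 1
      exact integral_ofReal.symm
    simp_rw [e1]
    have e2 : ∀ i : Fin n, (∑ j : Fin n, ∫ u in Set.Ioi (0:ℝ),
        z i * (starRingEnd ℂ) (z j) * ((Ai (x i + t + u) * Ai (x j + t + u) : ℝ) : ℂ))
        = ∫ u in Set.Ioi (0:ℝ), ∑ j : Fin n,
            z i * (starRingEnd ℂ) (z j) * ((Ai (x i + t + u) * Ai (x j + t + u) : ℝ) : ℂ) :=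
      fun i => (integral_finset_sum _ (fun j _ => hint_u i j)).symm
    simp_rw [e2]
    rw [← integral_finset_sum _ (fun i _ => integrable_finset_sum _ (fun j _ => hint_u i j))]
    have e4 : ∀ u : ℝ, (∑ i : Fin n, ∑ j : Fin n,
        z i * (starRingEnd ℂ) (z j) * ((Ai (x i + t + u) * Ai (x j + t + u) : ℝ) : ℂ))
        = ((Complex.normSq (∑ i : Fin n, z i * (Ai (x i + t + u) : ℂ)) : ℝ) : ℂ) := by
      intro u
      rw [← Complex.mul_conj, map_sum, Finset.sum_mul_sum]
      apply Finset.sum_congr rfl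
      intro i _
      apply Finset.sum_congr rfl
      intro j _
      rw [map_mul, Complex.conj_ofReal]
      push_cast
      ring
    simp_rw [e4]
    exact integral_ofReal
  -- main computation
  have hS : (∑ i : Fin n, ∑ j : Fin n,
        z i * (starRingEnd ℂ) (z j) * (Ksig Ai σ (x i) (x j) : ℂ))
      = ((∫ t, (∫ u in Set.Ioi (0:ℝ),
          Complex.normSq (∑ i : Fin n, z i * (Ai (x i + t + u) : ℂ))) ∂σ : ℝ) : ℂ) := by
    have e5 : ∀ i j : Fin n, z i * (starRingEnd ℂ) (z j) * (Ksig Ai σ (x i) (x j) : ℂ)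
        = ∫ t, (z i * (starRingEnd ℂ) (z j)
            * ((∫ u in Set.Ioi (0:ℝ), Ai (x i + t + u) * Ai (x j + t + u) : ℝ) : ℂ)) ∂σ := by
      intro i j
      rw [Ksig, integral_const_mul]
      congr 1
      exact integral_ofReal.symm
    simp_rw [e5]
    have e6 : ∀ i : Fin n, (∑ j : Fin n, ∫ t, (z i * (starRingEnd ℂ) (z j)
        * ((∫ u in Set.Ioi (0:ℝ), Ai (x i + t + u) * Ai (x j + t + u) : ℝ) : ℂ)) ∂σ)
        = ∫ t, (∑ j : Fin n, z i * (starRingEnd ℂ) (z j)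
            * ((∫ u in Set.Ioi (0:ℝ), Ai (x i + t + u) * Ai (x j + t + u) : ℝ) : ℂ)) ∂σ :=
      fun i => (integral_finset_sum _ (fun j _ => ((hgint i j).ofReal.const_mul _))).symm
    simp_rw [e6]
    have e7 : (∑ i : Fin n, ∫ t, (∑ j : Fin n, z i * (starRingEnd ℂ) (z j)
        * ((∫ u in Set.Ioi (0:ℝ), Ai (x i + t + u) * Ai (x j + t + u) : ℝ) : ℂ)) ∂σ)
        = ∫ t, (∑ i : Fin n, ∑ j : Fin n, z i * (starRingEnd ℂ) (z j)
            * ((∫ u in Set.Ioi (0:ℝ), Ai (x i + t + u) * Ai (x j + t + u) : ℝ) : ℂ)) ∂σ :=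
      (integral_finset_sum _ (fun i _ => integrable_finset_sum _
        (fun j _ => ((hgint i j).ofReal.const_mul _)))).symm
    rw [e7]
    simp_rw [key]
    exact integral_ofReal
  constructor
  · rw [hS]
    exact Complex.ofReal_im _
  · rw [hS, Complex.ofReal_re]
    exact integral_nonneg fun t => integral_nonneg fun u => Complex.normSq_nonneg _
end

section
/- For every real z ≠ 0, the function x ↦ e^{i z x}·(1/2)·∫_{|x|}^∞ (e^{−t}/t) dt is (Lebesgue) integrable on ℝ and ∫_{−∞}^∞ e^{i z x}·(1/2)·(∫_{|x|}^∞ (e^{−t}/t) dt) dx = arctan(z)/z (a real number, viewed as a complex number); that is, the Fourier transform of the Milne–Schwarzschild kernel K(x) = (1/2)·E(|x|) with E(x) = ∫_x^∞ (e^{−t}/t) dt equals arctan(z)/z. -/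
open MeasureTheory Set Real

-- L1: complex exponential integral on Ioi 0
lemma aux_cexp_Ioi {c : ℂ} (hc : c.re < 0) :
    ∫ x : ℝ in Set.Ioi (0:ℝ), Complex.exp (c * x) = -c⁻¹ := by
  have hc0 : c ≠ 0 := fun h => by simp [h] at hc
  have hderiv : ∀ x ∈ Set.Ici (0:ℝ),
      HasDerivAt (fun x : ℝ => c⁻¹ * Complex.exp (c * x)) (Complex.exp (c * x)) x := by
    intro x _
    have h1 : HasDerivAt (fun w : ℂ => c⁻¹ * Complex.exp (c * w))
        (c⁻¹ * (Complex.exp (c * x) * c)) (x : ℂ) := by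
      have := (((Complex.hasDerivAt_exp (c * (x:ℂ))).comp _
        ((hasDerivAt_id (x:ℂ)).const_mul c)).const_mul c⁻¹)
      simpa [Function.comp] using this
    have h2 := h1.comp_ofReal
    have he : c⁻¹ * (Complex.exp (c * (x:ℂ)) * c) = Complex.exp (c * x) := by
      rw [mul_comm (Complex.exp _) c, ← mul_assoc, inv_mul_cancel₀ hc0, one_mul]
    rwa [he] at h2
  have hint : IntegrableOn (fun x : ℝ => Complex.exp (c * x)) (Set.Ioi (0:ℝ)) := by
    apply Integrable.mono' (exp_neg_integrableOn_Ioi 0 (neg_pos.mpr hc : (0:ℝ) < -c.re))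
    · exact (Complex.continuous_exp.comp (by fun_prop)).aestronglyMeasurable
    · filter_upwards with x
      simp [Complex.norm_exp, neg_mul, mul_comm, le_refl]
  have htend : Filter.Tendsto (fun x : ℝ => c⁻¹ * Complex.exp (c * x)) Filter.atTop (nhds 0) := by
    rw [tendsto_zero_iff_norm_tendsto_zero]
    have : (fun x : ℝ => ‖c⁻¹ * Complex.exp (c * x)‖) = fun x => ‖c⁻¹‖ * Real.exp (c.re * x) := by
      ext x; simp [Complex.norm_exp]
    rw [this]
    rw [show (0:ℝ) = ‖c⁻¹‖ * 0 by ring]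
    apply Filter.Tendsto.const_mul
    exact Real.tendsto_exp_atBot.comp (by
      exact Filter.Tendsto.const_mul_atTop_of_neg hc Filter.tendsto_id)
  have := integral_Ioi_of_hasDerivAt_of_tendsto' hderiv hint htend
  simpa using this

lemma aux_cexpOn {c : ℂ} (hc : c.re < 0) :
    IntegrableOn (fun x : ℝ => Complex.exp (c * x)) (Set.Ioi (0:ℝ)) := by
  apply Integrable.mono' (exp_neg_integrableOn_Ioi 0 (neg_pos.mpr hc : (0:ℝ) < -c.re))
  · exact (Complex.continuous_exp.comp (by fun_prop)).aestronglyMeasurable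
  · filter_upwards with x
    simp [Complex.norm_exp, neg_mul, mul_comm, le_refl]

lemma aux_fourier {z s : ℝ} (hs : 0 < s) :
    Integrable (fun x : ℝ => Complex.exp (Complex.I*z*x - s*|x|)) ∧
    ∫ x : ℝ, Complex.exp (Complex.I*z*x - s*|x|)
      = 2*(s:ℂ) / ((s:ℂ)^2 + (z:ℂ)^2) := by
  set c₁ : ℂ := Complex.I*z - s with hc₁def
  set c₂ : ℂ := -(Complex.I*z + s) with hc₂def
  have hc₁ : c₁.re < 0 := by simp [hc₁def]; exact hs
  have hc₂ : c₂.re < 0 := by simp [hc₂def]; exact hs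
  set v := (Set.Ioi (0:ℝ)).indicator (fun x : ℝ => Complex.exp (c₁*x)) with hvdef
  set w := (Set.Ioi (0:ℝ)).indicator (fun x : ℝ => Complex.exp (c₂*x)) with hwdef
  have hv : Integrable v := (integrable_indicator_iff measurableSet_Ioi).2 (aux_cexpOn hc₁)
  have hw : Integrable w := (integrable_indicator_iff measurableSet_Ioi).2 (aux_cexpOn hc₂)
  have hw' : Integrable (fun x : ℝ => w (-x)) := by
    have := (integrable_comp_mul_left_iff w (by norm_num : (-1:ℝ) ≠ 0)).2 hw
    simpa using this
  have hae : (fun x : ℝ => Complex.exp (Complex.I*z*x - s*|x|))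
      =ᵐ[volume] (fun x => v x + w (-x)) := by
    have h0 : ∀ᵐ x : ℝ, x ≠ 0 := by
      rw [ae_iff]; simpa using volume_singleton (a := (0:ℝ))
    filter_upwards [h0] with x hx
    rcases lt_or_gt_of_ne hx with h | h
    · have h1 : x ∉ Set.Ioi (0:ℝ) := by simpa using h.le
      have h2 : -x ∈ Set.Ioi (0:ℝ) := by simpa using h
      rw [hvdef, hwdef]
      simp only [Set.indicator_of_notMem h1, Set.indicator_of_mem h2, zero_add]
      rw [abs_of_neg h]
      congr 1
      push_cast [hc₂def]
      ring
    · have h1 : x ∈ Set.Ioi (0:ℝ) := h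
      have h2 : -x ∉ Set.Ioi (0:ℝ) := by simpa using h.le
      rw [hvdef, hwdef]
      simp only [Set.indicator_of_mem h1, Set.indicator_of_notMem h2, add_zero]
      rw [abs_of_pos h]
      congr 1
      push_cast [hc₁def]
      ring
  refine ⟨(hv.add hw').congr hae.symm, ?_⟩
  rw [integral_congr_ae hae, integral_add hv hw', integral_neg_eq_self w volume]
  rw [hvdef, hwdef, integral_indicator measurableSet_Ioi, integral_indicator measurableSet_Ioi,
    aux_cexp_Ioi hc₁, aux_cexp_Ioi hc₂]
  have hs1 : (s:ℂ) - Complex.I*z ≠ 0 := by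
    intro h
    have := congrArg Complex.re h
    simp at this; exact hs.ne' this
  have hs2 : (s:ℂ) + Complex.I*z ≠ 0 := by
    intro h
    have := congrArg Complex.re h
    simp at this; exact hs.ne' this
  have e1 : -c₁⁻¹ = ((s:ℂ) - Complex.I*z)⁻¹ := by
    rw [hc₁def, ← inv_neg]; ring_nf
  have e2 : -c₂⁻¹ = ((s:ℂ) + Complex.I*z)⁻¹ := by
    rw [hc₂def, ← inv_neg]; ring_nf
  rw [e1, e2]
  have hss : (s:ℂ)^2 + (z:ℂ)^2 ≠ 0 := by
    have h := Complex.ofReal_ne_zero.2 (by positivity : (s^2+z^2:ℝ) ≠ 0)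
    push_cast at h; exact h
  field_simp
  linear_combination (2*(s:ℂ)*(z:ℂ)^2) * Complex.I_sq

lemma aux_real_int {s : ℝ} (hs : 0 < s) :
    Integrable (fun x : ℝ => Real.exp (-(s*|x|))) ∧
    ∫ x : ℝ, Real.exp (-(s*|x|)) = 2/s := by
  set u := (Set.Ioi (0:ℝ)).indicator (fun x : ℝ => Real.exp (-(s*x))) with hudef
  have huOn : IntegrableOn (fun x : ℝ => Real.exp (-(s*x))) (Set.Ioi (0:ℝ)) := by
    simpa [neg_mul] using exp_neg_integrableOn_Ioi (0:ℝ) hs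
  have hu : Integrable u := (integrable_indicator_iff measurableSet_Ioi).2 huOn
  have hu' : Integrable (fun x : ℝ => u (-x)) := by
    have := (integrable_comp_mul_left_iff u (by norm_num : (-1:ℝ) ≠ 0)).2 hu
    simpa using this
  have hae : (fun x : ℝ => Real.exp (-(s*|x|))) =ᵐ[volume] (fun x => u x + u (-x)) := by
    have h0 : ∀ᵐ x : ℝ, x ≠ 0 := by
      rw [ae_iff]; simpa using volume_singleton (a := (0:ℝ))
    filter_upwards [h0] with x hx
    rcases lt_or_gt_of_ne hx with h | h
    · have h1 : x ∉ Set.Ioi (0:ℝ) := by simpa using h.le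
      have h2 : -x ∈ Set.Ioi (0:ℝ) := by simpa using h
      rw [hudef]
      simp only [Set.indicator_of_notMem h1, Set.indicator_of_mem h2, zero_add]
      rw [abs_of_neg h]
    · have h1 : x ∈ Set.Ioi (0:ℝ) := h
      have h2 : -x ∉ Set.Ioi (0:ℝ) := by simpa using h.le
      rw [hudef]
      simp only [Set.indicator_of_mem h1, Set.indicator_of_notMem h2, add_zero]
      rw [abs_of_pos h]
  have hiu : ∫ x : ℝ, u x = 1/s := by
    rw [hudef, integral_indicator measurableSet_Ioi]
    have := integral_comp_mul_right_Ioi (fun t : ℝ => Real.exp (-t)) 0 hs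
    simp only [zero_mul] at this
    have h2 : ∀ x : ℝ, Real.exp (-(s*x)) = Real.exp (-(x*s)) := fun x => by ring_nf
    simp_rw [h2]
    rw [show (fun x : ℝ => Real.exp (-(x*s))) = fun x : ℝ => (fun t : ℝ => Real.exp (-t)) (x*s) from rfl] at *
    rw [this, integral_exp_neg_Ioi]
    simp
  refine ⟨(hu.add hu').congr hae.symm, ?_⟩
  rw [integral_congr_ae hae, integral_add hu hu', integral_neg_eq_self u volume, hiu]
  ring

lemma aux_scale {r : ℝ} (hr : 0 < r) :
    (∫ t in Set.Ioi r, Real.exp (-t)/t) = ∫ s in Set.Ioi (1:ℝ), Real.exp (-(r*s))/s := by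
  have h := integral_comp_mul_left_Ioi (fun t : ℝ => Real.exp (-t)/t) 1 hr
  simp only [mul_one, smul_eq_mul] at h
  have h2 : ∀ s : ℝ, Real.exp (-(r*s))/s = r * (Real.exp (-(r*s))/(r*s)) := by
    intro s
    rcases eq_or_ne s 0 with rfl | hs
    · simp
    · field_simp
  calc ∫ t in Set.Ioi r, Real.exp (-t)/t
      = r * (r⁻¹ * ∫ t in Set.Ioi r, Real.exp (-t)/t) := by
        field_simp
    _ = r * ∫ s in Set.Ioi (1:ℝ), Real.exp (-(r*s))/(r*s) := by rw [← h]
    _ = ∫ s in Set.Ioi (1:ℝ), Real.exp (-(r*s))/s := by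
        rw [← integral_const_mul]
        exact integral_congr_ae (Filter.Eventually.of_forall fun s => (h2 s).symm)

lemma aux_outer {z : ℝ} (hz : 0 < z) :
    ∫ s in Set.Ioi (1:ℝ), (s^2 + z^2)⁻¹ = Real.arctan z / z := by
  have h := integral_comp_mul_right_Ioi (fun u : ℝ => (z^2)⁻¹ * (1+u^2)⁻¹) 1
    (inv_pos.mpr hz)
  simp only [one_mul, smul_eq_mul, inv_inv] at h
  have h2 : ∀ s : ℝ, (z^2)⁻¹ * (1+(s*z⁻¹)^2)⁻¹ = (s^2+z^2)⁻¹ := by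
    intro s
    rw [← mul_inv]
    congr 1
    field_simp
    ring
  simp_rw [← h2]
  rw [h, integral_const_mul, integral_Ioi_inv_one_add_sq,
    Real.arctan_inv_of_pos hz]
  field_simp
  ring

lemma stmt_core (z : ℝ) (hz : 0 < z) :
    Integrable (fun x : ℝ =>
      Complex.exp (Complex.I * z * x) *
        (((1 / 2 : ℝ) * ∫ t in Set.Ioi |x|, Real.exp (-t) / t : ℝ) : ℂ)) ∧
    ∫ x : ℝ, Complex.exp (Complex.I * z * x) *
        (((1 / 2 : ℝ) * ∫ t in Set.Ioi |x|, Real.exp (-t) / t : ℝ) : ℂ) =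
      ((Real.arctan z / z : ℝ) : ℂ) := by
  set ν := volume.restrict (Set.Ioi (1:ℝ)) with hν
  set F : ℝ → ℝ → ℂ := fun x s => Complex.exp (Complex.I*z*x - s*|x|) / (2*s) with hF
  have hmeas : AEStronglyMeasurable (Function.uncurry F) (volume.prod ν) := by
    apply Measurable.aestronglyMeasurable
    rw [hF]
    fun_prop
  have hnorm : ∀ x s : ℝ, 0 < s → ‖F x s‖ = Real.exp (-(s*|x|)) / (2*s) := by
    intro x s hs
    rw [hF]
    simp only [norm_div, Complex.norm_exp]
    congr 1
    · congr 1
      simp [Complex.sub_re, Complex.mul_re]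
    · have h2 : ((2:ℂ)*(s:ℂ)) = ((2*s:ℝ):ℂ) := by push_cast; ring
      rw [h2, Complex.norm_real, Real.norm_eq_abs, abs_of_pos (by linarith : (0:ℝ) < 2*s)]
  have hInt : Integrable (Function.uncurry F) (volume.prod ν) := by
    rw [integrable_prod_iff' hmeas]
    constructor
    · rw [hν, ae_restrict_iff' measurableSet_Ioi]
      filter_upwards with s hs
      have hs0 : (0:ℝ) < s := lt_trans one_pos hs
      have heq : (fun x : ℝ => Function.uncurry F (x, s))
          = fun x : ℝ => Complex.exp (Complex.I*z*x - s*|x|) / (2*(s:ℂ)) := by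
        rw [hF]; rfl
      rw [heq]
      exact ((aux_fourier (z := z) hs0).1).div_const _
    · have hcongr : ∀ᵐ s ∂ν, (∫ x : ℝ, ‖Function.uncurry F (x, s)‖) = (s^2)⁻¹ := by
        rw [hν, ae_restrict_iff' measurableSet_Ioi]
        filter_upwards with s hs
        have hs0 : (0:ℝ) < s := lt_trans one_pos hs
        have : (fun x : ℝ => ‖Function.uncurry F (x, s)‖)
            = fun x : ℝ => Real.exp (-(s*|x|)) / (2*s) := by
          ext x; exact hnorm x s hs0
        rw [this]
        simp_rw [div_eq_mul_inv]
        rw [integral_mul_const, (aux_real_int hs0).2]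
        field_simp
      have hbase : Integrable (fun s : ℝ => (s^2)⁻¹) ν := by
        rw [hν]
        apply ((integrableOn_Ioi_rpow_of_lt (by norm_num : (-2:ℝ) < -1)
          one_pos).congr_fun ?_ measurableSet_Ioi)
        intro s hs
        have hs0 : (0:ℝ) < s := lt_trans one_pos hs
        show s ^ (-2:ℝ) = (s^2)⁻¹
        rw [Real.rpow_neg hs0.le, ← Real.rpow_natCast s 2]
        norm_num
      exact hbase.congr (hcongr.mono fun s h => h.symm)
  have hker : ∀ x : ℝ, x ≠ 0 →
      Complex.exp (Complex.I*z*x) *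
        (((1 / 2 : ℝ) * ∫ t in Set.Ioi |x|, Real.exp (-t) / t : ℝ) : ℂ)
      = ∫ s, F x s ∂ν := by
    intro x hx
    have hr : (0:ℝ) < |x| := abs_pos.mpr hx
    rw [aux_scale hr]
    have h1 : (1/2:ℝ) * ∫ s in Set.Ioi (1:ℝ), Real.exp (-(|x| * s))/s
        = ∫ s in Set.Ioi (1:ℝ), Real.exp (-(|x| * s))/(2*s) := by
      rw [← integral_const_mul]
      apply integral_congr_ae (Filter.Eventually.of_forall fun s => ?_)
      ring
    rw [h1, hν, show ((∫ s in Set.Ioi (1:ℝ), Real.exp (-(|x| * s))/(2*s) : ℝ) : ℂ)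
      = ∫ s in Set.Ioi (1:ℝ), ((Real.exp (-(|x| * s))/(2*s) : ℝ) : ℂ) from (integral_ofReal).symm,
      ← integral_const_mul]
    apply integral_congr_ae (Filter.Eventually.of_forall fun s => ?_)
    rw [hF]
    push_cast
    rw [← mul_div_assoc, ← Complex.exp_add]
    ring_nf
  have haeker : ∀ᵐ x : ℝ, Complex.exp (Complex.I*z*x) *
        (((1 / 2 : ℝ) * ∫ t in Set.Ioi |x|, Real.exp (-t) / t : ℝ) : ℂ)
      = ∫ s, F x s ∂ν := by
    have h0 : ∀ᵐ x : ℝ, x ≠ 0 := by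
      rw [ae_iff]; simpa using volume_singleton (a := (0:ℝ))
    filter_upwards [h0] with x hx using hker x hx
  constructor
  · exact (hInt.integral_prod_left).congr (Filter.EventuallyEq.symm haeker)
  · calc ∫ x : ℝ, Complex.exp (Complex.I*z*x) *
          (((1 / 2 : ℝ) * ∫ t in Set.Ioi |x|, Real.exp (-t) / t : ℝ) : ℂ)
        = ∫ x : ℝ, ∫ s, F x s ∂ν := integral_congr_ae haeker
      _ = ∫ s, (∫ x : ℝ, F x s) ∂ν := integral_integral_swap hInt
      _ = ∫ s in Set.Ioi (1:ℝ), ((((s:ℝ)^2 + z^2)⁻¹ : ℝ) : ℂ) := by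
          rw [hν]
          apply setIntegral_congr_fun measurableSet_Ioi
          intro s hs
          have hs0 : (0:ℝ) < s := lt_trans one_pos hs
          rw [hF]
          simp only
          rw [integral_div, (aux_fourier (z := z) hs0).2]
          have h2s : (2*(s:ℂ)) ≠ 0 := by
            simp [Complex.ofReal_ne_zero]
            exact_mod_cast hs0.ne'
          have hss : (s:ℂ)^2 + (z:ℂ)^2 ≠ 0 := by
            have h := Complex.ofReal_ne_zero.2 (by positivity : (s^2+z^2:ℝ) ≠ 0)
            push_cast at h; exact h
          push_cast
          field_simp
          ring_nf
          exact mul_inv_cancel₀ (by exact_mod_cast hs0.ne')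
      _ = ((∫ s in Set.Ioi (1:ℝ), (s^2 + z^2)⁻¹ : ℝ) : ℂ) := integral_ofReal
      _ = ((Real.arctan z / z : ℝ) : ℂ) := by rw [aux_outer hz]

/-- For every real `z ≠ 0`, the function
`x ↦ e^{i z x}·(1/2)·∫_{|x|}^∞ (e^{−t}/t) dt` is Lebesgue integrable on `ℝ` and
`∫_{−∞}^∞ e^{i z x}·(1/2)·(∫_{|x|}^∞ (e^{−t}/t) dt) dx = arctan(z)/z`;
that is, the Fourier transform of the Milne–Schwarzschild kernel
`K(x) = (1/2)·E(|x|)` with `E(x) = ∫_x^∞ (e^{−t}/t) dt` equals `arctan(z)/z`. -/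
theorem stmt_14 (z : ℝ) (hz : z ≠ 0) :
    Integrable (fun x : ℝ =>
      Complex.exp (Complex.I * z * x) *
        (((1 / 2 : ℝ) * ∫ t in Set.Ioi |x|, Real.exp (-t) / t : ℝ) : ℂ)) ∧
    ∫ x : ℝ, Complex.exp (Complex.I * z * x) *
        (((1 / 2 : ℝ) * ∫ t in Set.Ioi |x|, Real.exp (-t) / t : ℝ) : ℂ) =
      ((Real.arctan z / z : ℝ) : ℂ) := by
  rcases hz.lt_or_gt with hneg | hpos
  · obtain ⟨h1, h2⟩ := stmt_core (-z) (by linarith)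
    have hfun : (fun x : ℝ => Complex.exp (Complex.I * z * x) *
        (((1 / 2 : ℝ) * ∫ t in Set.Ioi |x|, Real.exp (-t) / t : ℝ) : ℂ))
        = fun x : ℝ => (fun y : ℝ => Complex.exp (Complex.I * ((-z : ℝ) : ℂ) * y) *
          (((1 / 2 : ℝ) * ∫ t in Set.Ioi |y|, Real.exp (-t) / t : ℝ) : ℂ)) ((-1) * x) := by
      ext x
      simp only [neg_one_mul, abs_neg]
      congr 2
      push_cast; ring
    constructor
    · rw [hfun]
      exact (integrable_comp_mul_left_iff _ (by norm_num : (-1:ℝ) ≠ 0)).2 h1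
    · rw [hfun]
      simp only [neg_one_mul]
      rw [integral_neg_eq_self (fun y : ℝ => Complex.exp (Complex.I * ((-z : ℝ) : ℂ) * y) *
          (((1 / 2 : ℝ) * ∫ t in Set.Ioi |y|, Real.exp (-t) / t : ℝ) : ℂ)) volume, h2]
      norm_num [Real.arctan_neg, neg_div_neg_eq]
  · exact stmt_core z hpos
end
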